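/- arXiv:2008.12358 — 4 statements merged into one kernel-verified Lean document; each statement's English description precedes it below -/
import Mathlib

section
/- Let (X,d) be a complete separable metric space and m a nonnegative Borel measure on X, finite on bounded sets, with m(X) = ∞. Then for every q ∈ (1,∞) one has λ_{0,q}(X) ≥ (h(X)/q)^q. In particular, taking q = 2 yields Cheeger's inequality λ_{0,2}(X) ≥ h(X)²/4. -/
open MeasureTheory Filter Topology ENNReal

/-- The slope (pointwise Lipschitz constant) of `f` at `x`, with the convention that it is `0`
at isolated points. -/
noncomputable def lipSlope {X : Type*} [MetricSpace X] (f : X → ℝ) (x : X) : ℝ :=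
  Filter.limsup (fun y => |f y - f x| / dist y x) (𝓝[≠] x)

/-- Lipschitz functions with bounded support. -/
def LipBS {X : Type*} [MetricSpace X] (f : X → ℝ) : Prop :=
  (∃ K : NNReal, LipschitzWith K f) ∧ Bornology.IsBounded (Function.support f)

/-- Functions which are Lipschitz on bounded sets. -/
def LipLoc {X : Type*} [MetricSpace X] (f : X → ℝ) : Prop :=
  ∀ s : Set X, Bornology.IsBounded s → ∃ K : NNReal, LipschitzOnWith K f s

/-- The perimeter of a Borel set `A`. -/
noncomputable def perimeter {X : Type*} [MetricSpace X] [MeasurableSpace X]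
    (m : Measure X) (A : Set X) : ℝ≥0∞ :=
  sInf { p : ℝ≥0∞ | ∃ f : ℕ → X → ℝ, (∀ n, LipLoc (f n)) ∧
    Tendsto (fun n => ∫⁻ x, ENNReal.ofReal |f n x - A.indicator (fun _ => (1:ℝ)) x| ∂m)
      atTop (𝓝 0) ∧
    p = Filter.liminf (fun n => ∫⁻ x, ENNReal.ofReal (lipSlope (f n) x) ∂m) atTop }

/-- The Cheeger constant (infinite measure case):
`h(X) = inf { Per(A)/m(A) : A Borel, 0 < m(A) < ∞ }`. -/
noncomputable def cheegerInf {X : Type*} [MetricSpace X] [MeasurableSpace X]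
    (m : Measure X) : ℝ≥0∞ :=
  sInf { h : ℝ≥0∞ | ∃ A : Set X, MeasurableSet A ∧ 0 < m A ∧ m A < ⊤ ∧
    h = perimeter m A / m A }

/-- The bottom of the `q`-spectrum `λ_{0,q}` (infinite measure case):
the infimum of `(∫ lip(f)^q dm)/(∫ |f|^q dm)` over nonzero `f ∈ Lip_bs(X)`. -/
noncomputable def lambdaZeroP {X : Type*} [MetricSpace X] [MeasurableSpace X]
    (m : Measure X) (q : ℝ) : ℝ≥0∞ :=
  sInf { l : ℝ≥0∞ | ∃ f : X → ℝ, LipBS f ∧ ¬ (f =ᵐ[m] 0) ∧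
    l = (∫⁻ x, ENNReal.ofReal ((lipSlope f x) ^ q) ∂m) /
        (∫⁻ x, ENNReal.ofReal (|f x| ^ q) ∂m) }

namespace CheegerAux

variable {X : Type*} [MetricSpace X]

noncomputable def eSlope (f : X → ℝ) (x : X) : ℝ≥0∞ :=
  Filter.limsup (fun y => ENNReal.ofReal (|f y - f x| / dist y x)) (𝓝[≠] x)

lemma lipSlope_of_bot {f : X → ℝ} {x : X} (h : 𝓝[≠] x = ⊥) : lipSlope f x = 0 := by
  rw [lipSlope, Filter.limsup_eq, h]
  have h1 : {a : ℝ | ∀ᶠ y in (⊥ : Filter X), |f y - f x| / dist y x ≤ a} = Set.univ := by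
    ext a; simp
  rw [h1]
  exact Real.sInf_of_not_bddBelow not_bddBelow_univ

lemma eSlope_of_bot {f : X → ℝ} {x : X} (h : 𝓝[≠] x = ⊥) : eSlope f x = 0 := by
  rw [eSlope, h, Filter.limsup_bot]; rfl

lemma quot_bdd {f : X → ℝ} {K : NNReal} (hf : LipschitzWith K f) (x : X) :
    ∀ y : X, |f y - f x| / dist y x ≤ (K : ℝ) := by
  intro y
  rcases eq_or_ne y x with rfl | hyx
  · simp
  · rw [div_le_iff₀ (dist_pos.2 hyx)]
    simpa [Real.dist_eq] using hf.dist_le_mul y x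

lemma quot_nonneg (f : X → ℝ) (x y : X) : 0 ≤ |f y - f x| / dist y x :=
  div_nonneg (abs_nonneg _) dist_nonneg

lemma lipSlope_nonneg {f : X → ℝ} {K : NNReal} (hf : LipschitzWith K f) (x : X) :
    0 ≤ lipSlope f x := by
  rcases eq_or_neBot (𝓝[≠] x) with h | h
  · rw [lipSlope_of_bot h]
  · exact le_limsup_of_frequently_le (Frequently.of_forall fun y => quot_nonneg f x y)
      ⟨(K : ℝ), Filter.eventually_map.2 (Filter.Eventually.of_forall (quot_bdd hf x))⟩

lemma ofReal_lipSlope {f : X → ℝ} {K : NNReal} (hf : LipschitzWith K f) (x : X) :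
    ENNReal.ofReal (lipSlope f x) = eSlope f x := by
  rcases eq_or_neBot (𝓝[≠] x) with h | h
  · rw [lipSlope_of_bot h, eSlope_of_bot h]; simp
  · exact Monotone.map_limsup_of_continuousAt (F := 𝓝[≠] x)
      (fun a b hab => ENNReal.ofReal_le_ofReal hab) _
      (ENNReal.continuous_ofReal.continuousAt)
      ⟨(K : ℝ), Filter.eventually_map.2 (Filter.Eventually.of_forall (quot_bdd hf x))⟩
      (Filter.IsBoundedUnder.isCoboundedUnder_le ⟨0, Filter.eventually_map.2
        (Filter.Eventually.of_forall fun y => quot_nonneg f x y)⟩)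

/-- Chain-rule type bound on slopes. -/
lemma lipSlope_le_mul {f g : X → ℝ} {K : NNReal} (hf : LipschitzWith K f) {x : X} {C : ℝ}
    (hC : 0 ≤ C) (h : ∀ᶠ y in 𝓝[≠] x, |g y - g x| ≤ C * |f y - f x|) :
    lipSlope g x ≤ C * lipSlope f x := by
  rcases eq_or_neBot (𝓝[≠] x) with hb | hb
  · rw [lipSlope_of_bot hb, lipSlope_of_bot hb]; simp
  · have hnn : ∀ y, (0:ℝ) ≤ |g y - g x| / dist y x := fun y => quot_nonneg g x y
    have hcob : (𝓝[≠] x).IsCoboundedUnder (· ≤ ·) (fun y => |g y - g x| / dist y x) :=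
      Filter.IsBoundedUnder.isCoboundedUnder_le ⟨0, Filter.eventually_map.2
        (Filter.Eventually.of_forall hnn)⟩
    have hbddf : (𝓝[≠] x).IsBoundedUnder (· ≤ ·) (fun y => |f y - f x| / dist y x) :=
      ⟨(K : ℝ), Filter.eventually_map.2 (Filter.Eventually.of_forall (quot_bdd hf x))⟩
    refine le_of_forall_pos_le_add fun ε hε => ?_
    have hε' : 0 < ε / (C + 1) := div_pos hε (by linarith)
    have hev : ∀ᶠ y in 𝓝[≠] x, |f y - f x| / dist y x < lipSlope f x + ε / (C + 1) := by
      refine eventually_lt_of_limsup_lt ?_ hbddf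
      exact lt_add_of_pos_right _ hε'
    have hev2 : ∀ᶠ y in 𝓝[≠] x,
        |g y - g x| / dist y x ≤ C * lipSlope f x + ε := by
      filter_upwards [hev, h, self_mem_nhdsWithin] with y hy1 hy2 (hy3 : y ≠ x)
      have hd : 0 < dist y x := dist_pos.2 hy3
      have hle : C * (ε / (C + 1)) ≤ ε := by
        rw [mul_comm, div_mul_eq_mul_div, div_le_iff₀ (by linarith)]
        nlinarith
      calc |g y - g x| / dist y x ≤ (C * |f y - f x|) / dist y x := by gcongr
        _ = C * (|f y - f x| / dist y x) := mul_div_assoc _ _ _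
        _ ≤ C * (lipSlope f x + ε / (C + 1)) := mul_le_mul_of_nonneg_left hy1.le hC
        _ = C * lipSlope f x + C * (ε / (C + 1)) := mul_add _ _ _
        _ ≤ C * lipSlope f x + ε := by linarith
    exact limsup_le_of_le hcob hev2

lemma lipSlope_nonpos_of_locally_const {g : X → ℝ} {x : X} (h : ∀ᶠ y in 𝓝 x, g y = g x) :
    lipSlope g x ≤ 0 := by
  rcases eq_or_neBot (𝓝[≠] x) with hb | hb
  · rw [lipSlope_of_bot hb]
  · refine limsup_le_of_le (Filter.IsBoundedUnder.isCoboundedUnder_le ⟨0, Filter.eventually_map.2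
      (Filter.Eventually.of_forall fun y => quot_nonneg g x y)⟩) ?_
    filter_upwards [nhdsWithin_le_nhds h] with y hy
    simp [hy]

lemma abs_rpow_sub_rpow_le {q c a b : ℝ} (hq : 1 ≤ q) (ha : a ∈ Set.Icc 0 c)
    (hb : b ∈ Set.Icc 0 c) : |a ^ q - b ^ q| ≤ q * c ^ (q - 1) * |a - b| := by
  have hc : (0:ℝ) ≤ c := le_trans ha.1 ha.2
  have key := Convex.norm_image_sub_le_of_norm_hasDerivWithin_le
    (f := fun t : ℝ => t ^ q) (f' := fun t : ℝ => q * t ^ (q - 1)) (s := Set.Icc 0 c)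
    (C := q * c ^ (q - 1))
    (fun t _ => (Real.hasDerivAt_rpow_const (Or.inr hq)).hasDerivWithinAt)
    (fun t ht => by
      rw [Real.norm_eq_abs, abs_of_nonneg (mul_nonneg (by linarith) (Real.rpow_nonneg ht.1 _))]
      have h5 : t ^ (q - 1) ≤ c ^ (q - 1) := Real.rpow_le_rpow ht.1 ht.2 (by linarith)
      nlinarith)
    (convex_Icc 0 c) hb ha
  simpa [Real.norm_eq_abs] using key

lemma lipSlope_abs_rpow_le {f : X → ℝ} {K : NNReal} (hf : LipschitzWith K f) {q : ℝ}
    (hq : 1 < q) (x : X) :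
    lipSlope (fun y => |f y| ^ q) x ≤ q * |f x| ^ (q - 1) * lipSlope f x := by
  have key : ∀ δ : ℝ, 0 < δ →
      lipSlope (fun y => |f y| ^ q) x ≤ (q * (|f x| + δ) ^ (q - 1)) * lipSlope f x := by
    intro δ hδ
    refine lipSlope_le_mul hf (C := q * (|f x| + δ) ^ (q - 1)) (by positivity) ?_
    have hcont : ∀ᶠ y in 𝓝 x, |f y - f x| < δ := by
      have h1 : ∀ᶠ y in 𝓝 x, f y ∈ Metric.ball (f x) δ :=
        (hf.continuous.tendsto x) (Metric.ball_mem_nhds _ hδ)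
      filter_upwards [h1] with y hy
      simpa [Real.dist_eq] using hy
    filter_upwards [nhdsWithin_le_nhds hcont] with y hy
    have h1 : |f y| ≤ |f x| + δ := by
      have := abs_sub_abs_le_abs_sub (f y) (f x); linarith
    have ha : |f y| ∈ Set.Icc 0 (|f x| + δ) := ⟨abs_nonneg _, h1⟩
    have hb : |f x| ∈ Set.Icc 0 (|f x| + δ) := ⟨abs_nonneg _, by linarith [abs_nonneg (f x)]⟩
    have hstep := abs_rpow_sub_rpow_le hq.le ha hb
    have h2 := abs_abs_sub_abs_le_abs_sub (f y) (f x)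
    have h3 : (0:ℝ) ≤ q * (|f x| + δ) ^ (q - 1) := by positivity
    exact hstep.trans (mul_le_mul_of_nonneg_left h2 h3)
  have hL : Tendsto (fun nn : ℕ => (q * (|f x| + 1 / ((nn : ℝ) + 1)) ^ (q - 1)) * lipSlope f x)
      atTop (𝓝 (q * |f x| ^ (q - 1) * lipSlope f x)) := by
    have h0 : Tendsto (fun nn : ℕ => |f x| + 1 / ((nn : ℝ) + 1)) atTop (𝓝 (|f x| + 0)) :=
      tendsto_const_nhds.add tendsto_one_div_add_atTop_nhds_zero_nat
    rw [add_zero] at h0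
    have h1 : Tendsto (fun nn : ℕ => (|f x| + 1 / ((nn : ℝ) + 1)) ^ (q - 1)) atTop
        (𝓝 (|f x| ^ (q - 1))) :=
      ((Real.continuousAt_rpow_const _ _ (Or.inr (by linarith))).tendsto).comp h0
    exact (h1.const_mul q).mul_const _
  refine ge_of_tendsto hL (Filter.Eventually.of_forall fun nn => ?_)
  exact key (1 / ((nn : ℝ) + 1)) (by positivity)

variable [TopologicalSpace.SeparableSpace X] [Nonempty X]

lemma eSlope_eq_iInf_iSup (f : X → ℝ) (hf : Continuous f) (x : X) :
    eSlope f x = ⨅ n : ℕ, ⨆ k : ℕ,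
      (if 0 < dist (TopologicalSpace.denseSeq X k) x ∧
          dist (TopologicalSpace.denseSeq X k) x < 1 / (n + 1) then
        ENNReal.ofReal (|f (TopologicalSpace.denseSeq X k) - f x| /
          dist (TopologicalSpace.denseSeq X k) x) else 0) := by
  apply le_antisymm
  · refine le_iInf fun n => ?_
    refine limsup_le_of_le (by isBoundedDefault) ?_
    have hball : ∀ᶠ y in 𝓝[≠] x, dist y x < 1 / (n + 1) ∧ y ≠ x := by
      refine Filter.Eventually.and (nhdsWithin_le_nhds ?_) self_mem_nhdsWithin
      have hpos : (0:ℝ) < 1 / (n + 1) := by positivity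
      refine Filter.eventually_iff_exists_mem.2 ⟨Metric.ball x (1 / (n + 1)),
        Metric.ball_mem_nhds x hpos, fun y hy => by simpa [Metric.mem_ball] using hy⟩
    filter_upwards [hball] with y hy
    obtain ⟨hy1, hy2⟩ := hy
    obtain ⟨u, hu_mem, hu_lim⟩ := mem_closure_iff_seq_limit.1
      ((TopologicalSpace.denseRange_denseSeq X) y)
    have hdy : 0 < dist y x := dist_pos.2 hy2
    have hdist : Tendsto (fun i => dist (u i) x) atTop (𝓝 (dist y x)) :=
      (hu_lim.dist tendsto_const_nhds)
    have hev : ∀ᶠ i in atTop, 0 < dist (u i) x ∧ dist (u i) x < 1 / (n + 1) :=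
      (hdist.eventually (eventually_gt_nhds hdy)).and
        (hdist.eventually (eventually_lt_nhds hy1))
    have hq : Tendsto (fun i => ENNReal.ofReal (|f (u i) - f x| / dist (u i) x)) atTop
        (𝓝 (ENNReal.ofReal (|f y - f x| / dist y x))) := by
      refine (ENNReal.continuous_ofReal.tendsto _).comp ?_
      exact (((hf.tendsto y).comp hu_lim).sub tendsto_const_nhds).abs.div hdist hdy.ne'
    refine le_of_tendsto hq ?_
    filter_upwards [hev] with i hi
    obtain ⟨k, hk⟩ := hu_mem i
    calc ENNReal.ofReal (|f (u i) - f x| / dist (u i) x)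
        = (if 0 < dist (TopologicalSpace.denseSeq X k) x ∧
            dist (TopologicalSpace.denseSeq X k) x < 1 / (n + 1) then
            ENNReal.ofReal (|f (TopologicalSpace.denseSeq X k) - f x| /
              dist (TopologicalSpace.denseSeq X k) x) else 0) := by
          rw [← hk] at hi ⊢; rw [if_pos hi]
      _ ≤ _ := le_iSup (fun k => (if 0 < dist (TopologicalSpace.denseSeq X k) x ∧
            dist (TopologicalSpace.denseSeq X k) x < 1 / (n + 1) then
            ENNReal.ofReal (|f (TopologicalSpace.denseSeq X k) - f x| /
              dist (TopologicalSpace.denseSeq X k) x) else 0)) k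
  · rw [eSlope, Filter.limsup_eq]
    refine le_sInf fun c hc => ?_
    simp only [Set.mem_setOf_eq] at hc
    rw [Filter.eventually_iff_exists_mem] at hc
    obtain ⟨s, hs, hcs⟩ := hc
    rw [mem_nhdsWithin] at hs
    obtain ⟨U, hU, hxU, hUs⟩ := hs
    obtain ⟨ε, hε, hball⟩ := Metric.isOpen_iff.1 hU x hxU
    obtain ⟨n, hn⟩ := exists_nat_one_div_lt hε
    refine iInf_le_of_le n (iSup_le fun k => ?_)
    split_ifs with h
    · refine hcs _ (hUs ⟨hball ?_, ?_⟩)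
      · rw [Metric.mem_ball]
        calc dist (TopologicalSpace.denseSeq X k) x < 1 / (n + 1) := h.2
          _ < ε := hn
      · simpa using (dist_pos.1 h.1)
    · exact zero_le

lemma measurable_eSlope [MeasurableSpace X] [OpensMeasurableSpace X]
    {f : X → ℝ} (hf : Continuous f) : Measurable (eSlope f) := by
  have h : eSlope f = fun x => ⨅ n : ℕ, ⨆ k : ℕ,
      (if 0 < dist (TopologicalSpace.denseSeq X k) x ∧
          dist (TopologicalSpace.denseSeq X k) x < 1 / (n + 1) then
        ENNReal.ofReal (|f (TopologicalSpace.denseSeq X k) - f x| /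
          dist (TopologicalSpace.denseSeq X k) x) else 0) := by
    ext x; exact eSlope_eq_iInf_iSup f hf x
  rw [h]
  refine Measurable.iInf fun n => Measurable.iSup fun k => Measurable.ite ?_ ?_ measurable_const
  · exact (measurableSet_lt measurable_const (continuous_const.dist continuous_id).measurable).inter
      (measurableSet_lt (continuous_const.dist continuous_id).measurable measurable_const)
  · exact ENNReal.measurable_ofReal.comp
      (((measurable_const.sub hf.measurable).abs).div
        (continuous_const.dist continuous_id).measurable)

lemma coarea [MeasurableSpace X] [BorelSpace X] (m : Measure X) [SigmaFinite m]
    {g : X → ℝ} {Kg : NNReal} (hKg : LipschitzWith Kg g) (hg0 : ∀ x, 0 ≤ g x)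
    (hfin : m (closure (Function.support g)) ≠ ⊤) :
    cheegerInf m * ∫⁻ x, ENNReal.ofReal (g x) ∂m ≤ ∫⁻ x, eSlope g x ∂m := by
  have hg_cont : Continuous g := hKg.continuous
  have hg_meas : Measurable g := hg_cont.measurable
  have hSg : Measurable (eSlope g) := measurable_eSlope hg_cont
  have hsub : ∀ t : ℝ, 0 < t → {x | t < g x} ⊆ closure (Function.support g) := by
    intro t ht x hx
    exact subset_closure (Function.mem_support.2 (ne_of_gt (ht.trans hx)))
  have hfin' : ∀ t : ℝ, 0 < t → m {x | t < g x} ≠ ⊤ := by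
    intro t ht
    exact ((measure_mono (hsub t ht)).trans_lt (lt_top_iff_ne_top.2 hfin)).ne
  -- Step 1 : pointwise (in t) bound via the perimeter and the Cheeger constant
  have step1 : ∀ t : ℝ, 0 < t → cheegerInf m * m {x | t < g x} ≤
      Filter.liminf (fun n : ℕ => ∫⁻ x, (if t ≤ g x ∧ g x ≤ t + 1 / ((n : ℝ) + 1) then
        ENNReal.ofReal ((n : ℝ) + 1) * eSlope g x else 0) ∂m) atTop := by
    intro t ht
    by_cases hA0 : m {x | t < g x} = 0
    · rw [hA0, mul_zero]; exact zero_le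
    have hAmeas : MeasurableSet {x | t < g x} := measurableSet_lt measurable_const hg_meas
    -- the approximating truncations
    set fs : ℕ → X → ℝ := fun n x => min 1 (max 0 (((n : ℝ) + 1) * (g x - t))) with hfsdef
    have htrunc : ∀ a b : ℝ, |min 1 (max 0 a) - min 1 (max 0 b)| ≤ |a - b| := by
      intro a b
      have h := (((LipschitzWith.id (α := ℝ)).const_max 0).const_min 1).dist_le_mul a b
      simpa [Real.dist_eq] using h
    have hfs_diff : ∀ n x y, |fs n x - fs n y| ≤ ((n : ℝ) + 1) * |g x - g y| := by
      intro n x y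
      have h := htrunc (((n : ℝ) + 1) * (g x - t)) (((n : ℝ) + 1) * (g y - t))
      calc |fs n x - fs n y| ≤ |((n : ℝ) + 1) * (g x - t) - ((n : ℝ) + 1) * (g y - t)| := h
        _ = ((n : ℝ) + 1) * |g x - g y| := by
            rw [← mul_sub, abs_mul, abs_of_nonneg (by positivity)]; ring_nf
    have hfs_lip : ∀ n : ℕ, LipschitzWith (((n : NNReal) + 1) * Kg) (fs n) := by
      intro n
      refine LipschitzWith.of_dist_le_mul fun x y => ?_
      rw [Real.dist_eq]
      refine (hfs_diff n x y).trans ?_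
      have h2 : |g x - g y| ≤ (Kg : ℝ) * dist x y := by
        simpa [Real.dist_eq] using hKg.dist_le_mul x y
      have h3 : (0:ℝ) ≤ (n : ℝ) + 1 := by positivity
      calc ((n : ℝ) + 1) * |g x - g y| ≤ ((n : ℝ) + 1) * ((Kg : ℝ) * dist x y) :=
            mul_le_mul_of_nonneg_left h2 h3
        _ = ((((n : NNReal) + 1) * Kg : NNReal) : ℝ) * dist x y := by
            push_cast; ring
    have hfs_mem : ∀ n x, fs n x ∈ Set.Icc (0:ℝ) 1 := by
      intro n x
      constructor
      · exact le_min zero_le_one (le_max_left 0 _)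
      · exact min_le_left _ _
    -- L¹ convergence to the indicator of {t < g}
    set B : ℕ → Set X := fun n => {x | t < g x ∧ g x < t + 1 / ((n : ℝ) + 1)} with hBdef
    have hBmeas : ∀ n, MeasurableSet (B n) :=
      fun n => (measurableSet_lt measurable_const hg_meas).inter
        (measurableSet_lt hg_meas measurable_const)
    have hpt : ∀ n x, ENNReal.ofReal |fs n x - ({x | t < g x}.indicator (fun _ => (1:ℝ)) x)| ≤
        (B n).indicator (fun _ => (1 : ℝ≥0∞)) x := by
      intro n x
      by_cases hxB : x ∈ B n
      · rw [Set.indicator_of_mem hxB]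
        refine ENNReal.ofReal_le_one.2 ?_
        have h1 := hfs_mem n x
        have h2 : {x | t < g x}.indicator (fun _ => (1:ℝ)) x ∈ Set.Icc (0:ℝ) 1 := by
          by_cases hx : x ∈ {x | t < g x} <;> simp [hx]
        rw [abs_sub_le_iff]
        constructor <;> [skip; skip] <;> obtain ⟨a1, a2⟩ := h1 <;> obtain ⟨b1, b2⟩ := h2 <;>
          linarith
      · rw [Set.indicator_of_notMem hxB]
        have hzero : fs n x - {x | t < g x}.indicator (fun _ => (1:ℝ)) x = 0 := by
          rcases le_or_gt (g x) t with hgt | hgt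
          · have h1 : {x | t < g x}.indicator (fun _ => (1:ℝ)) x = 0 :=
              Set.indicator_of_notMem (by simpa using not_lt.2 hgt) _
            have h2 : ((n : ℝ) + 1) * (g x - t) ≤ 0 :=
              mul_nonpos_of_nonneg_of_nonpos (by positivity) (by linarith)
            have h3 : fs n x = 0 := by
              rw [hfsdef]; simp only []
              rw [max_eq_left h2, min_eq_right zero_le_one]
            rw [h1, h3, sub_zero]
          · have hge : t + 1 / ((n : ℝ) + 1) ≤ g x := by
              by_contra hcon
              exact hxB ⟨hgt, not_le.1 hcon⟩
            have h1 : {x | t < g x}.indicator (fun _ => (1:ℝ)) x = 1 :=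
              Set.indicator_of_mem (by simpa using hgt) _
            have h2 : (1:ℝ) ≤ ((n : ℝ) + 1) * (g x - t) := by
              have hn : (0:ℝ) < (n : ℝ) + 1 := by positivity
              rw [← div_le_iff₀' hn]
              linarith
            have h3 : fs n x = 1 := by
              rw [hfsdef]; simp only []
              rw [max_eq_right (le_trans zero_le_one h2), min_eq_left h2]
            rw [h1, h3, sub_self]
        rw [hzero]; simp
    have hL1bd : ∀ n, (∫⁻ x, ENNReal.ofReal
        |fs n x - ({x | t < g x}.indicator (fun _ => (1:ℝ)) x)| ∂m) ≤ m (B n) := by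
      intro n
      calc (∫⁻ x, ENNReal.ofReal
          |fs n x - ({x | t < g x}.indicator (fun _ => (1:ℝ)) x)| ∂m)
          ≤ ∫⁻ x, (B n).indicator (fun _ => (1 : ℝ≥0∞)) x ∂m := lintegral_mono (hpt n)
        _ = m (B n) := by rw [lintegral_indicator_const (hBmeas n), one_mul]
    have hBanti : Antitone B := by
      intro a b hab x hx
      obtain ⟨h1, h2⟩ := hx
      refine ⟨h1, h2.trans_le ?_⟩
      have : ((a : ℝ) + 1) ≤ (b : ℝ) + 1 := by
        have := (Nat.cast_le (α := ℝ)).2 hab; linarith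
      have h3 : 1 / ((b : ℝ) + 1) ≤ 1 / ((a : ℝ) + 1) :=
        one_div_le_one_div_of_le (by positivity) this
      linarith
    have hBempty : ⋂ n, B n = ∅ := by
      ext x
      simp only [Set.mem_iInter, Set.mem_empty_iff_false, iff_false]
      intro hall
      obtain ⟨h1, _⟩ := hall 0
      obtain ⟨n, hn⟩ := exists_nat_one_div_lt (sub_pos.2 h1)
      obtain ⟨_, h2⟩ := hall n
      have : (1:ℝ) / ((n:ℝ) + 1) < g x - t := by exact_mod_cast hn
      linarith
    have hBtend : Tendsto (fun n => m (B n)) atTop (𝓝 0) := by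
      have h := tendsto_measure_iInter_atTop
        (fun n => (hBmeas n).nullMeasurableSet) hBanti
        ⟨0, by
          refine ((measure_mono ?_).trans_lt (lt_top_iff_ne_top.2 hfin)).ne
          exact fun x hx => hsub t ht hx.1⟩
      rwa [hBempty, measure_empty] at h
    have hL1 : Tendsto (fun n => ∫⁻ x, ENNReal.ofReal
        |fs n x - ({x | t < g x}.indicator (fun _ => (1:ℝ)) x)| ∂m) atTop (𝓝 0) :=
      tendsto_of_tendsto_of_tendsto_of_le_of_le tendsto_const_nhds hBtend
        (fun n => zero_le) hL1bd
    -- the perimeter bound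
    have hper : perimeter m {x | t < g x} ≤
        Filter.liminf (fun n => ∫⁻ x, ENNReal.ofReal (lipSlope (fs n) x) ∂m) atTop := by
      refine sInf_le ⟨fs, fun n => ?_, hL1, rfl⟩
      intro s _
      exact ⟨_, (hfs_lip n).lipschitzOnWith (s := s)⟩
    have hcheeg : cheegerInf m * m {x | t < g x} ≤ perimeter m {x | t < g x} := by
      have h1 : cheegerInf m ≤ perimeter m {x | t < g x} / m {x | t < g x} :=
        sInf_le ⟨_, hAmeas, pos_iff_ne_zero.2 hA0, lt_top_iff_ne_top.2 (hfin' t ht), rfl⟩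
      calc cheegerInf m * m {x | t < g x}
          ≤ (perimeter m {x | t < g x} / m {x | t < g x}) * m {x | t < g x} :=
            mul_le_mul_left h1 _
        _ = perimeter m {x | t < g x} := ENNReal.div_mul_cancel hA0 (hfin' t ht)
    refine hcheeg.trans (hper.trans (Filter.liminf_le_liminf
      (Filter.Eventually.of_forall fun n => lintegral_mono fun x => ?_)))
    -- pointwise slope bound
    by_cases h1 : t ≤ g x
    · by_cases h2 : g x ≤ t + 1 / ((n : ℝ) + 1)
      · rw [if_pos ⟨h1, h2⟩]
        have hs : lipSlope (fs n) x ≤ ((n : ℝ) + 1) * lipSlope g x :=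
          lipSlope_le_mul hKg (by positivity)
            (Filter.Eventually.of_forall fun y => hfs_diff n y x)
        calc ENNReal.ofReal (lipSlope (fs n) x) ≤
            ENNReal.ofReal (((n : ℝ) + 1) * lipSlope g x) := ENNReal.ofReal_le_ofReal hs
          _ = ENNReal.ofReal ((n : ℝ) + 1) * ENNReal.ofReal (lipSlope g x) :=
              ENNReal.ofReal_mul (by positivity)
          _ = ENNReal.ofReal ((n : ℝ) + 1) * eSlope g x := by rw [ofReal_lipSlope hKg]
      · -- g x > t + 1/(n+1) : fs n is locally constant equal to 1
        have hgt : t + 1 / ((n : ℝ) + 1) < g x := not_le.1 h2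
        have hev : ∀ᶠ y in 𝓝 x, fs n y = fs n x := by
          have hcont : ∀ᶠ y in 𝓝 x, t + 1 / ((n : ℝ) + 1) < g y :=
            (hg_cont.tendsto x).eventually (eventually_gt_nhds hgt)
          filter_upwards [hcont] with y hy
          have hval : ∀ z : X, t + 1 / ((n : ℝ) + 1) < g z → fs n z = 1 := by
            intro z hz
            have h2 : (1:ℝ) ≤ ((n : ℝ) + 1) * (g z - t) := by
              have hn : (0:ℝ) < (n : ℝ) + 1 := by positivity
              rw [← div_le_iff₀' hn]; linarith
            rw [hfsdef]; simp only []
            rw [max_eq_right (le_trans zero_le_one h2), min_eq_left h2]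
          rw [hval y hy, hval x hgt]
        have := lipSlope_nonpos_of_locally_const hev
        calc ENNReal.ofReal (lipSlope (fs n) x) = 0 := ENNReal.ofReal_eq_zero.2 this
          _ ≤ _ := zero_le
    · -- g x < t : fs n is locally constant equal to 0
      have hlt : g x < t := not_le.1 h1
      have hev : ∀ᶠ y in 𝓝 x, fs n y = fs n x := by
        have hcont : ∀ᶠ y in 𝓝 x, g y < t :=
          (hg_cont.tendsto x).eventually (eventually_lt_nhds hlt)
        filter_upwards [hcont] with y hy
        have hval : ∀ z : X, g z < t → fs n z = 0 := by
          intro z hz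
          have h2 : ((n : ℝ) + 1) * (g z - t) ≤ 0 :=
            mul_nonpos_of_nonneg_of_nonpos (by positivity) (by linarith)
          rw [hfsdef]; simp only []
          rw [max_eq_left h2, min_eq_right zero_le_one]
        rw [hval y hy, hval x hlt]
      have := lipSlope_nonpos_of_locally_const hev
      calc ENNReal.ofReal (lipSlope (fs n) x) = 0 := ENNReal.ofReal_eq_zero.2 this
        _ ≤ _ := zero_le
  -- Step 2 : integrate in t and use Fatou + Tonelli
  have hprod_meas : ∀ n : ℕ, Measurable (fun p : ℝ × X =>
      (if p.1 ≤ g p.2 ∧ g p.2 ≤ p.1 + 1 / ((n : ℝ) + 1) then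
        ENNReal.ofReal ((n : ℝ) + 1) * eSlope g p.2 else 0)) := by
    intro n
    refine Measurable.ite ?_ (measurable_const.mul (hSg.comp measurable_snd)) measurable_const
    have h1 : MeasurableSet {p : ℝ × X | p.1 ≤ g p.2} :=
      measurableSet_le measurable_fst (hg_meas.comp measurable_snd)
    have h2 : MeasurableSet {p : ℝ × X | g p.2 ≤ p.1 + 1 / ((n : ℝ) + 1)} :=
      measurableSet_le (hg_meas.comp measurable_snd) (measurable_fst.add_const _)
    exact (h1.inter h2)
  have hC_meas : ∀ n : ℕ, Measurable (fun t : ℝ =>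
      ∫⁻ x, (if t ≤ g x ∧ g x ≤ t + 1 / ((n : ℝ) + 1) then
        ENNReal.ofReal ((n : ℝ) + 1) * eSlope g x else 0) ∂m) :=
    fun n => (hprod_meas n).lintegral_prod_right'
  have hswap : ∀ n : ℕ, (∫⁻ t in Set.Ioi (0:ℝ),
      ∫⁻ x, (if t ≤ g x ∧ g x ≤ t + 1 / ((n : ℝ) + 1) then
        ENNReal.ofReal ((n : ℝ) + 1) * eSlope g x else 0) ∂m ∂(volume)) ≤
      ∫⁻ x, eSlope g x ∂m := by
    intro n
    rw [lintegral_lintegral_swap ((hprod_meas n).aemeasurable)]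
    refine lintegral_mono fun x => ?_
    have hiff : ∀ s : ℝ, (s ≤ g x ∧ g x ≤ s + 1 / ((n : ℝ) + 1)) ↔
        s ∈ Set.Icc (g x - 1 / ((n : ℝ) + 1)) (g x) := by
      intro s
      simp only [Set.mem_Icc]
      constructor <;> rintro ⟨u1, u2⟩ <;> constructor <;> linarith
    have heq : (fun s : ℝ => (if s ≤ g x ∧ g x ≤ s + 1 / ((n : ℝ) + 1) then
        ENNReal.ofReal ((n : ℝ) + 1) * eSlope g x else 0)) =
        (Set.Icc (g x - 1 / ((n : ℝ) + 1)) (g x)).indicator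
          (fun _ => ENNReal.ofReal ((n : ℝ) + 1) * eSlope g x) := by
      ext s
      rw [Set.indicator_apply, if_congr (hiff s) rfl rfl]
    rw [heq, lintegral_indicator_const measurableSet_Icc]
    have hle : (volume.restrict (Set.Ioi (0:ℝ))) (Set.Icc (g x - 1 / ((n : ℝ) + 1)) (g x)) ≤
        ENNReal.ofReal (1 / ((n : ℝ) + 1)) := by
      rw [Measure.restrict_apply measurableSet_Icc]
      refine (measure_mono Set.inter_subset_left).trans_eq ?_
      rw [Real.volume_Icc, show g x - (g x - 1 / ((n : ℝ) + 1)) = 1 / ((n : ℝ) + 1) by ring]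
    calc ENNReal.ofReal ((n : ℝ) + 1) * eSlope g x *
          (volume.restrict (Set.Ioi (0:ℝ))) (Set.Icc (g x - 1 / ((n : ℝ) + 1)) (g x))
        ≤ ENNReal.ofReal ((n : ℝ) + 1) * eSlope g x * ENNReal.ofReal (1 / ((n : ℝ) + 1)) :=
          mul_le_mul_right hle _
      _ = (ENNReal.ofReal ((n : ℝ) + 1) * ENNReal.ofReal (1 / ((n : ℝ) + 1))) * eSlope g x := by
          ring
      _ = eSlope g x := by
          rw [← ENNReal.ofReal_mul (by positivity), mul_one_div_cancel (by positivity), ENNReal.ofReal_one, one_mul]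
  calc cheegerInf m * ∫⁻ x, ENNReal.ofReal (g x) ∂m
      = cheegerInf m * ∫⁻ t in Set.Ioi (0:ℝ), m {x | t < g x} ∂(volume) := by
        rw [lintegral_eq_lintegral_meas_lt m (Filter.Eventually.of_forall hg0)
          hg_meas.aemeasurable]
    _ ≤ ∫⁻ t in Set.Ioi (0:ℝ), cheegerInf m * m {x | t < g x} ∂(volume) :=
        lintegral_const_mul_le _ _
    _ ≤ ∫⁻ t in Set.Ioi (0:ℝ), Filter.liminf (fun n : ℕ =>
          ∫⁻ x, (if t ≤ g x ∧ g x ≤ t + 1 / ((n : ℝ) + 1) then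
            ENNReal.ofReal ((n : ℝ) + 1) * eSlope g x else 0) ∂m) atTop ∂(volume) := by
        refine lintegral_mono_ae ((ae_restrict_iff' measurableSet_Ioi).2
          (Filter.Eventually.of_forall fun t ht => step1 t ht))
    _ ≤ Filter.liminf (fun n : ℕ => ∫⁻ t in Set.Ioi (0:ℝ),
          ∫⁻ x, (if t ≤ g x ∧ g x ≤ t + 1 / ((n : ℝ) + 1) then
            ENNReal.ofReal ((n : ℝ) + 1) * eSlope g x else 0) ∂m ∂(volume)) atTop :=
        lintegral_liminf_le hC_meas
    _ ≤ Filter.liminf (fun _ : ℕ => ∫⁻ x, eSlope g x ∂m) atTop :=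
        Filter.liminf_le_liminf (Filter.Eventually.of_forall hswap)
    _ = ∫⁻ x, eSlope g x ∂m := Filter.liminf_const _

end CheegerAux

open CheegerAux in
/-- `q`-Cheeger inequality (infinite measure case): for a complete separable metric measure
space with `m(X) = ∞` and `m` finite on bounded sets, for every `q ∈ (1,∞)` one has
`λ_{0,q} ≥ (h(X)/q)^q`; in particular (`q = 2`) Cheeger's inequality `λ_{0,2} ≥ h(X)²/4`. -/
theorem cheeger_ineq_infinite {X : Type*} [MetricSpace X] [CompleteSpace X]
    [TopologicalSpace.SeparableSpace X] [MeasurableSpace X] [BorelSpace X]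
    (m : Measure X)
    (hbdd : ∀ s : Set X, Bornology.IsBounded s → m s < ⊤)
    (hinf : m Set.univ = ⊤)
    (q : ℝ) (hq : 1 < q) :
    (cheegerInf m / ENNReal.ofReal q) ^ q ≤ lambdaZeroP m q := by
  classical
  have hq0 : (0:ℝ) < q := zero_lt_one.trans hq
  haveI hXne : Nonempty X := by
    by_contra hempty
    rw [not_nonempty_iff] at hempty
    rw [Set.univ_eq_empty_iff.2 hempty, measure_empty] at hinf
    exact ENNReal.zero_ne_top hinf
  set x₀ : X := Classical.arbitrary X with hx₀
  haveI : SigmaFinite m := by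
    refine ⟨⟨⟨fun n => Metric.closedBall x₀ n, fun _ => trivial,
      fun n => hbdd _ Metric.isBounded_closedBall, ?_⟩⟩⟩
    refine Set.eq_univ_of_forall fun x => Set.mem_iUnion.2 ?_
    obtain ⟨n, hn⟩ := exists_nat_ge (dist x x₀)
    exact ⟨n, Metric.mem_closedBall.2 hn⟩
  refine le_sInf ?_
  rintro l ⟨f, ⟨⟨K, hK⟩, hsupp⟩, hne, rfl⟩
  -- boundedness of f
  obtain ⟨R, hR⟩ := hsupp.subset_closedBall x₀
  obtain ⟨M, hM0, hfM⟩ : ∃ M : ℝ, 0 ≤ M ∧ ∀ x, |f x| ≤ M := by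
    refine ⟨|f x₀| + K * max R 0, by positivity, fun x => ?_⟩
    by_cases hx : f x = 0
    · rw [hx, abs_zero]; positivity
    · have hx' : x ∈ Metric.closedBall x₀ R := hR (Function.mem_support.2 hx)
      have h1 : |f x - f x₀| ≤ K * dist x x₀ := by
        simpa [Real.dist_eq] using hK.dist_le_mul x x₀
      have h2 : dist x x₀ ≤ max R 0 := le_max_of_le_left (Metric.mem_closedBall.1 hx')
      have h3 : (K:ℝ) * dist x x₀ ≤ K * max R 0 := mul_le_mul_of_nonneg_left h2 K.coe_nonneg
      have h4 : |f x| - |f x₀| ≤ |f x - f x₀| := abs_sub_abs_le_abs_sub _ _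
      linarith
  -- the function g = |f|^q is Lipschitz with bounded support
  have hg_lip : LipschitzWith (Real.toNNReal (q * M ^ (q - 1) * K)) (fun x => |f x| ^ q) := by
    refine LipschitzWith.of_dist_le_mul fun x y => ?_
    rw [Real.dist_eq, Real.coe_toNNReal _ (by positivity)]
    have h1 := abs_rpow_sub_rpow_le hq.le
      (Set.mem_Icc.2 ⟨abs_nonneg (f x), hfM x⟩) (Set.mem_Icc.2 ⟨abs_nonneg (f y), hfM y⟩)
    have h2 := abs_abs_sub_abs_le_abs_sub (f x) (f y)
    have h3 : |f x - f y| ≤ K * dist x y := by simpa [Real.dist_eq] using hK.dist_le_mul x y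
    have h4 : (0:ℝ) ≤ q * M ^ (q - 1) := by positivity
    refine h1.trans (le_trans (mul_le_mul_of_nonneg_left h2 h4) ?_)
    calc q * M ^ (q - 1) * |f x - f y| ≤ q * M ^ (q - 1) * (K * dist x y) :=
          mul_le_mul_of_nonneg_left h3 h4
      _ = q * M ^ (q - 1) * K * dist x y := by ring
  have hgsupp : Function.support (fun x => |f x| ^ q) ⊆ Function.support f := by
    intro x hx
    simp only [Function.mem_support] at hx ⊢
    intro h0; apply hx; rw [h0]; simp [Real.zero_rpow hq0.ne']
  have hclos_fin : m (closure (Function.support (fun x => |f x| ^ q))) ≠ ⊤ :=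
    (hbdd _ ((hsupp.subset hgsupp).closure)).ne
  -- the denominator
  set Dq := ∫⁻ x, ENNReal.ofReal (|f x| ^ q) ∂m with hDqdef
  set N := ∫⁻ x, ENNReal.ofReal (lipSlope f x ^ q) ∂m with hNdef
  have hg_meas : Measurable fun x => ENNReal.ofReal (|f x| ^ q) :=
    ENNReal.measurable_ofReal.comp
      ((hK.continuous.abs.rpow_const fun x => Or.inr hq0.le).measurable)
  have hDq0 : Dq ≠ 0 := by
    intro h0
    rw [hDqdef, lintegral_eq_zero_iff hg_meas] at h0
    apply hne
    filter_upwards [h0] with x hx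
    simp only [Pi.zero_apply] at hx ⊢
    rw [ENNReal.ofReal_eq_zero] at hx
    have h2 : |f x| ^ q = 0 := le_antisymm hx (Real.rpow_nonneg (abs_nonneg _) q)
    exact abs_eq_zero.1 ((Real.rpow_eq_zero_iff_of_nonneg (abs_nonneg _)).1 h2).1
  have hDqtop : Dq ≠ ⊤ := by
    have hb : ∀ x, ENNReal.ofReal (|f x| ^ q) ≤
        (closure (Function.support f)).indicator (fun _ => ENNReal.ofReal (M ^ q)) x := by
      intro x
      by_cases hx : x ∈ closure (Function.support f)
      · rw [Set.indicator_of_mem hx]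
        exact ENNReal.ofReal_le_ofReal (Real.rpow_le_rpow (abs_nonneg _) (hfM x) hq0.le)
      · rw [Set.indicator_of_notMem hx]
        have hfx : f x = 0 := by
          by_contra h
          exact hx (subset_closure (Function.mem_support.2 h))
        simp [hfx, Real.zero_rpow hq0.ne']
    refine ne_top_of_le_ne_top ?_ (lintegral_mono hb)
    rw [lintegral_indicator_const isClosed_closure.measurableSet]
    exact (ENNReal.mul_lt_top ENNReal.ofReal_lt_top (hbdd _ hsupp.closure)).ne
  -- coarea inequality for g
  have hco : cheegerInf m * Dq ≤ ∫⁻ x, eSlope (fun x => |f x| ^ q) x ∂m :=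
    coarea m hg_lip (fun x => Real.rpow_nonneg (abs_nonneg _) q) hclos_fin
  -- chain rule pointwise
  set w : X → ℝ≥0∞ := fun x => ENNReal.ofReal (|f x| ^ (q - 1)) with hwdef
  set Sf : X → ℝ≥0∞ := fun x => ENNReal.ofReal (lipSlope f x) with hSfdef
  have hptw : ∀ x, eSlope (fun x => |f x| ^ q) x ≤
      ENNReal.ofReal q * (w x * Sf x) := by
    intro x
    rw [← ofReal_lipSlope hg_lip]
    refine le_trans (ENNReal.ofReal_le_ofReal (lipSlope_abs_rpow_le hK hq x)) ?_
    rw [ENNReal.ofReal_mul (mul_nonneg hq0.le (Real.rpow_nonneg (abs_nonneg _) _)),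
      ENNReal.ofReal_mul hq0.le, mul_assoc]
  have hSf_meas : Measurable Sf := by
    have h : Sf = eSlope f := funext fun x => ofReal_lipSlope hK x
    rw [h]; exact measurable_eSlope hK.continuous
  have hw_meas : Measurable w :=
    ENNReal.measurable_ofReal.comp
      ((hK.continuous.abs.rpow_const fun x => Or.inr (by linarith)).measurable)
  have hconj : q.HolderConjugate (q / (q - 1)) := Real.HolderConjugate.conjExponent hq
  have hholder := ENNReal.lintegral_mul_le_Lp_mul_Lq m hconj hSf_meas.aemeasurable
    hw_meas.aemeasurable
  have hNid : (∫⁻ x, Sf x ^ q ∂m) = N :=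
    lintegral_congr fun x => ENNReal.ofReal_rpow_of_nonneg (lipSlope_nonneg hK x) hq0.le
  have hDid : (∫⁻ x, w x ^ (q / (q - 1)) ∂m) = Dq := by
    refine lintegral_congr fun x => ?_
    rw [hwdef]
    rw [ENNReal.ofReal_rpow_of_nonneg (Real.rpow_nonneg (abs_nonneg _) _)
      (div_nonneg hq0.le (by linarith))]
    congr 1
    rw [← Real.rpow_mul (abs_nonneg _)]
    congr 1
    rw [mul_comm, div_mul_cancel₀ _ (sub_ne_zero.2 (ne_of_gt hq))]
  have hmain : cheegerInf m * Dq ≤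
      ENNReal.ofReal q * (N ^ (1/q) * Dq ^ ((q-1)/q)) := by
    refine hco.trans ?_
    calc ∫⁻ x, eSlope (fun x => |f x| ^ q) x ∂m
        ≤ ∫⁻ x, ENNReal.ofReal q * (w x * Sf x) ∂m := lintegral_mono hptw
      _ = ENNReal.ofReal q * ∫⁻ x, w x * Sf x ∂m :=
          lintegral_const_mul _ (hw_meas.mul hSf_meas)
      _ = ENNReal.ofReal q * ∫⁻ x, Sf x * w x ∂m := by
          congr 1; exact lintegral_congr fun x => mul_comm _ _
      _ ≤ ENNReal.ofReal q * ((∫⁻ x, Sf x ^ q ∂m) ^ (1/q) *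
            (∫⁻ x, w x ^ (q / (q - 1)) ∂m) ^ (1/(q / (q - 1)))) :=
          mul_le_mul_right hholder _
      _ = ENNReal.ofReal q * (N ^ (1/q) * Dq ^ ((q-1)/q)) := by
          rw [hNid, hDid, one_div_div]
  -- final algebra
  have hQ0 : ENNReal.ofReal q ≠ 0 := by
    simp only [ne_eq, ENNReal.ofReal_eq_zero, not_le]; exact hq0
  have hQtop : ENNReal.ofReal q ≠ ⊤ := ENNReal.ofReal_ne_top
  have hDqp0 : Dq ^ (1/q) ≠ 0 := (ENNReal.rpow_pos (pos_iff_ne_zero.2 hDq0) hDqtop).ne'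
  have hDqpt : Dq ^ (1/q) ≠ ⊤ := ENNReal.rpow_ne_top_of_nonneg (by positivity) hDqtop
  have h9 : (Dq ^ (1/q))⁻¹ * Dq = Dq ^ ((q-1)/q) := by
    have h8 := ENNReal.rpow_add (-(1/q)) 1 hDq0 hDqtop
    rw [ENNReal.rpow_one] at h8
    rw [← ENNReal.rpow_neg, ← h8]
    congr 1
    field_simp
    ring
  have key : ENNReal.ofReal q * (N ^ (1/q) * (Dq ^ (1/q))⁻¹) * Dq =
      ENNReal.ofReal q * (N ^ (1/q) * Dq ^ ((q-1)/q)) := by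
    calc ENNReal.ofReal q * (N ^ (1/q) * (Dq ^ (1/q))⁻¹) * Dq
        = ENNReal.ofReal q * N ^ (1/q) * ((Dq ^ (1/q))⁻¹ * Dq) := by ring
      _ = ENNReal.ofReal q * N ^ (1/q) * Dq ^ ((q-1)/q) := by rw [h9]
      _ = ENNReal.ofReal q * (N ^ (1/q) * Dq ^ ((q-1)/q)) := by ring
  have hfinal : cheegerInf m ≤ ENNReal.ofReal q * (N ^ (1/q) * (Dq ^ (1/q))⁻¹) :=
    (ENNReal.mul_le_mul_iff_left hDq0 hDqtop).1 (by rw [key]; exact hmain)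
  have hstep : cheegerInf m / ENNReal.ofReal q ≤ N ^ (1/q) * (Dq ^ (1/q))⁻¹ :=
    (ENNReal.div_le_iff_le_mul (Or.inl hQ0) (Or.inl hQtop)).2 (by rw [mul_comm]; exact hfinal)
  have hpow := ENNReal.rpow_le_rpow hstep hq0.le
  refine hpow.trans_eq ?_
  rw [ENNReal.mul_rpow_of_nonneg _ _ hq0.le, ← ENNReal.rpow_mul,
    one_div_mul_cancel hq0.ne', ENNReal.rpow_one, ENNReal.inv_rpow, ← ENNReal.rpow_mul,
    one_div_mul_cancel hq0.ne', ENNReal.rpow_one, ← div_eq_mul_inv]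
end

section
/- Let (X,d) be a complete metric space and m a nonnegative Borel measure on X, finite on bounded sets. Let f ∈ Lip_bs(X) with f ≥ 0 and set M := sup_X f. Then for Lebesgue-a.e. t > 0 the superlevel set {f > t} has finite perimeter, and the coarea inequality ∫_0^M Per({f > t}) dt ≤ ∫_X lip(f) dm holds. -/
open MeasureTheory Filter Topology ENNReal

section Aux
variable {X : Type*} [MetricSpace X] {f g : X → ℝ} {x : X} {K : NNReal}

lemma quot_nonneg (f : X → ℝ) (x y : X) : 0 ≤ |f y - f x| / dist y x :=
  div_nonneg (abs_nonneg _) dist_nonneg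

lemma quot_le_K (hf : LipschitzWith K f) (x y : X) : |f y - f x| / dist y x ≤ K := by
  rcases eq_or_ne (dist y x) 0 with h | h
  · simp [h, K.coe_nonneg]
  · rw [div_le_iff₀ (lt_of_le_of_ne dist_nonneg (Ne.symm h))]
    have := hf.dist_le_mul y x
    rwa [Real.dist_eq] at this

lemma lipSlope_bot (h : 𝓝[≠] x = ⊥) (f : X → ℝ) : lipSlope f x = 0 := by
  rw [lipSlope, Filter.limsup, h, Filter.map_bot, Filter.limsSup]
  have : {a : ℝ | ∀ᶠ n in (⊥ : Filter ℝ), n ≤ a} = Set.univ := by ext a; simp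
  rw [this]
  exact Real.sInf_of_not_bddBelow (by simpa using not_bddBelow_univ)

lemma lipSlope_nonneg_of_neBot (h : (𝓝[≠] x).NeBot) (hf : LipschitzWith K f) :
    0 ≤ lipSlope f x := by
  exact Filter.le_limsup_of_frequently_le
    (Frequently.of_forall fun y => quot_nonneg f x y)
    (isBoundedUnder_of ⟨K, fun y => quot_le_K hf x y⟩)

lemma lipSlope_nonneg (hf : LipschitzWith K f) : 0 ≤ lipSlope f x := by
  rcases eq_or_neBot (𝓝[≠] x) with h | h
  · rw [lipSlope_bot h]
  · exact lipSlope_nonneg_of_neBot h hf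

lemma lipSlope_le_K (hf : LipschitzWith K f) : lipSlope f x ≤ K := by
  rcases eq_or_neBot (𝓝[≠] x) with h | h
  · rw [lipSlope_bot h]; exact K.coe_nonneg
  · exact Filter.limsup_le_of_le
      (isCoboundedUnder_le_of_le _ fun y => quot_nonneg f x y)
      (Eventually.of_forall fun y => quot_le_K hf x y)

lemma lipSlope_le_of_eventually_const (h : ∀ᶠ y in 𝓝 x, g y = g x) : lipSlope g x ≤ 0 := by
  rcases eq_or_neBot (𝓝[≠] x) with hb | hb
  · rw [lipSlope_bot hb]
  · refine Filter.limsup_le_of_le (isCoboundedUnder_le_of_le _ fun y => quot_nonneg g x y) ?_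
    filter_upwards [nhdsWithin_le_nhds h] with y hy
    simp [hy]

lemma lipSlope_le_mul (hf : LipschitzWith K f) {c : ℝ} (hc : 0 ≤ c)
    (hfg : ∀ y, |g y - g x| ≤ c * |f y - f x|) : lipSlope g x ≤ c * lipSlope f x := by
  rcases eq_or_neBot (𝓝[≠] x) with hb | hb
  · rw [lipSlope_bot hb, lipSlope_bot hb, mul_zero]
  · have key : ∀ a, lipSlope f x < a → lipSlope g x ≤ c * a := by
      intro a ha
      have hev : ∀ᶠ y in 𝓝[≠] x, |f y - f x| / dist y x < a :=
        Filter.eventually_lt_of_limsup_lt ha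
          (isBoundedUnder_of ⟨K, fun y => quot_le_K hf x y⟩)
      refine Filter.limsup_le_of_le (isCoboundedUnder_le_of_le _ fun y => quot_nonneg g x y) ?_
      filter_upwards [hev] with y hy
      have ha' : 0 ≤ a := le_of_lt (lt_of_le_of_lt (quot_nonneg f x y) hy)
      calc |g y - g x| / dist y x ≤ c * |f y - f x| / dist y x :=
            div_le_div_of_nonneg_right (hfg y) dist_nonneg
        _ = c * (|f y - f x| / dist y x) := mul_div_assoc _ _ _
        _ ≤ c * a := mul_le_mul_of_nonneg_left hy.le hc
    by_contra hcon
    push_neg at hcon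
    rcases eq_or_lt_of_le hc with rfl | hc'
    · have := key (lipSlope f x + 1) (by linarith)
      simp at this; linarith
    · have h1 := key ((c * lipSlope f x + lipSlope g x) / (2 * c)) (by
        rw [lt_div_iff₀ (by linarith)]; nlinarith)
      have h2 : c * ((c * lipSlope f x + lipSlope g x) / (2 * c))
          = (c * lipSlope f x + lipSlope g x) / 2 := by
        field_simp
      rw [h2] at h1
      linarith
end Aux

section Meas
variable {X : Type*} [MetricSpace X] {f : X → ℝ} {K : NNReal}

/-- Sup of difference quotients over a punctured ball. -/
noncomputable def slopeSup (f : X → ℝ) (r : ℝ) (x : X) : ℝ :=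
  sSup ((fun y => |f y - f x| / dist y x) '' (Metric.ball x r \ {x}))

lemma slopeSup_nonneg (f : X → ℝ) (r : ℝ) (x : X) : 0 ≤ slopeSup f r x := by
  rcases ((fun y => |f y - f x| / dist y x) '' (Metric.ball x r \ {x})).eq_empty_or_nonempty
    with h | h
  · simp [slopeSup, h]
  · exact Real.sSup_nonneg (by rintro v ⟨y, -, rfl⟩; exact quot_nonneg f x y)

lemma slopeSup_bddAbove (hf : LipschitzWith K f) (r : ℝ) (x : X) :
    BddAbove ((fun y => |f y - f x| / dist y x) '' (Metric.ball x r \ {x})) :=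
  ⟨K, by rintro v ⟨y, -, rfl⟩; exact quot_le_K hf x y⟩

lemma slopeSup_lsc (hf : LipschitzWith K f) (r : ℝ) :
    LowerSemicontinuous (slopeSup f r) := by
  intro x a ha
  rcases lt_or_ge a 0 with ha0 | ha0
  · exact Eventually.of_forall fun x' => lt_of_lt_of_le ha0 (slopeSup_nonneg f r x')
  · -- a ≥ 0 and a < sSup, so the image set is nonempty and has an element > a
    have hne : ((fun y => |f y - f x| / dist y x) '' (Metric.ball x r \ {x})).Nonempty := by
      by_contra h
      rw [Set.not_nonempty_iff_eq_empty] at h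
      rw [slopeSup, h] at ha
      simp [Real.sSup_empty] at ha
      linarith
    obtain ⟨v, hv, hva⟩ := exists_lt_of_lt_csSup hne ha
    obtain ⟨y, hy, rfl⟩ := hv
    have hyx : y ≠ x := hy.2
    have hdpos : 0 < dist y x := dist_pos.mpr hyx
    have hcont : ContinuousAt (fun x' => |f y - f x'| / dist y x') x := by
      apply ContinuousAt.div
      · exact (continuous_const.sub (hf.continuous)).abs.continuousAt
      · exact (continuous_const.dist continuous_id).continuousAt
      · exact ne_of_gt hdpos
    have h1 : ∀ᶠ x' in 𝓝 x, a < |f y - f x'| / dist y x' :=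
      hcont.eventually (eventually_gt_nhds hva)
    have h2 : ∀ᶠ x' in 𝓝 x, dist y x' < r := by
      have : ContinuousAt (fun x' => dist y x') x :=
        (continuous_const.dist continuous_id).continuousAt
      exact this.eventually (eventually_lt_nhds hy.1)
    have h3 : ∀ᶠ x' in 𝓝 x, 0 < dist y x' := by
      have : ContinuousAt (fun x' => dist y x') x :=
        (continuous_const.dist continuous_id).continuousAt
      exact this.eventually (eventually_gt_nhds hdpos)
    filter_upwards [h1, h2, h3] with x' h1' h2' h3'
    have hy' : y ∈ Metric.ball x' r \ {x'} := by
      constructor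
      · exact Metric.mem_ball.mpr h2'
      · simp only [Set.mem_singleton_iff]
        intro hyx'
        rw [hyx'] at h3'
        simp at h3'
    calc a < |f y - f x'| / dist y x' := h1'
      _ ≤ slopeSup f r x' := le_csSup (slopeSup_bddAbove hf r x') ⟨y, hy', rfl⟩

lemma lipSlope_eq_iInf (hf : LipschitzWith K f) (x : X) :
    lipSlope f x = ⨅ n : ℕ, slopeSup f (1 / (n + 1)) x := by
  have hbd : BddBelow (Set.range fun n : ℕ => slopeSup f (1 / (n + 1)) x) :=
    ⟨0, by rintro v ⟨n, rfl⟩; exact slopeSup_nonneg f _ x⟩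
  rcases eq_or_neBot (𝓝[≠] x) with hb | hb
  · rw [lipSlope_bot hb]
    -- x is isolated: some punctured ball is empty
    have : ∃ r > 0, Metric.ball x r \ {x} = ∅ := by
      rw [← empty_mem_iff_bot] at hb
      obtain ⟨u, huo, hxu, husub⟩ := mem_nhdsWithin.mp hb
      obtain ⟨r, hr, hball⟩ := Metric.isOpen_iff.mp huo x hxu
      refine ⟨r, hr, Set.eq_empty_of_subset_empty ?_⟩
      refine subset_trans ?_ husub
      exact Set.inter_subset_inter hball (le_refl _)
    obtain ⟨r, hr, hball⟩ := this
    obtain ⟨n, hn⟩ := exists_nat_one_div_lt hr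
    refine le_antisymm ?_ ?_
    · exact le_ciInf fun k => slopeSup_nonneg f _ x
    · refine ciInf_le_of_le hbd n ?_
      have hsub : Metric.ball x (1 / ((n:ℝ) + 1)) \ {x} = ∅ := by
        refine Set.eq_empty_of_subset_empty (hball ▸ Set.diff_subset_diff_left
          (Metric.ball_subset_ball hn.le))
      rw [slopeSup, hsub]
      simp [Real.sSup_empty]
  · refine le_antisymm ?_ ?_
    · refine le_ciInf fun n => ?_
      refine Filter.limsup_le_of_le
        (isCoboundedUnder_le_of_le _ fun y => quot_nonneg f x y) ?_
      have hmem : Metric.ball x (1 / (n + 1)) \ {x} ∈ 𝓝[≠] x :=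
        diff_mem_nhdsWithin_compl (Metric.ball_mem_nhds x (by positivity)) _
      filter_upwards [hmem] with y hy
      exact le_csSup (slopeSup_bddAbove hf _ x) ⟨y, hy, rfl⟩
    · by_contra hcon
      push_neg at hcon
      obtain ⟨a, ha1, ha2⟩ := exists_between hcon
      have hev : ∀ᶠ y in 𝓝[≠] x, |f y - f x| / dist y x < a :=
        Filter.eventually_lt_of_limsup_lt ha1
          (isBoundedUnder_of ⟨K, fun y => quot_le_K hf x y⟩)
      obtain ⟨ε, hε, hsub⟩ := Metric.mem_nhdsWithin_iff.mp hev
      obtain ⟨n, hn⟩ := exists_nat_one_div_lt hε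
      have hle : slopeSup f (1 / (n + 1)) x ≤ a := by
        refine Real.sSup_le ?_ ?_
        · rintro v ⟨y, hy, rfl⟩
          have : y ∈ Metric.ball x ε ∩ {x}ᶜ :=
            ⟨Metric.ball_subset_ball hn.le hy.1, hy.2⟩
          exact (hsub this).le
        · have h0 : (0:ℝ) ≤ lipSlope f x := lipSlope_nonneg_of_neBot hb hf
          linarith
      have : (⨅ n : ℕ, slopeSup f (1 / (n + 1)) x) ≤ a := ciInf_le_of_le hbd n hle
      linarith
end Meas

lemma lipSlope_measurable {X : Type*} [MetricSpace X] [MeasurableSpace X] [BorelSpace X]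
    {f : X → ℝ} {K : NNReal} (hf : LipschitzWith K f) : Measurable (lipSlope f) := by
  have h : lipSlope f = fun x => ⨅ n : ℕ, slopeSup f (1 / (n + 1)) x :=
    funext (lipSlope_eq_iInf hf)
  rw [h]
  exact Measurable.iInf fun n => (slopeSup_lsc hf _).measurable

lemma perimeter_empty {X : Type*} [MetricSpace X] [MeasurableSpace X] (m : Measure X) :
    perimeter m (∅ : Set X) = 0 := by
  refine le_antisymm ?_ (zero_le)
  refine sInf_le ⟨fun _ _ => 0, fun n s _ => ⟨0, (LipschitzWith.const (0:ℝ)).lipschitzOnWith⟩,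
    ?_, ?_⟩
  · have : ∀ n : ℕ, (∫⁻ x, ENNReal.ofReal
        |(0:ℝ) - (∅ : Set X).indicator (fun _ => (1:ℝ)) x| ∂m) = 0 := by
      intro n; simp
    simpa [this] using tendsto_const_nhds
  · have hz : ∀ x : X, ENNReal.ofReal (lipSlope (fun _ : X => (0:ℝ)) x) = 0 := fun x =>
      ENNReal.ofReal_eq_zero.mpr (lipSlope_le_of_eventually_const (Eventually.of_forall fun _ => rfl))
    simp [hz]

/-- Coarea inequality: for a complete metric space with a Borel measure finite on bounded
sets and a nonnegative `f ∈ Lip_bs(X)` with `M = sup f`, for a.e. `t > 0` the superlevel set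
`{f > t}` has finite perimeter, and `∫_0^M Per({f > t}) dt ≤ ∫ lip(f) dm`. -/
theorem coarea_inequality {X : Type*} [MetricSpace X] [CompleteSpace X]
    [MeasurableSpace X] [BorelSpace X]
    (m : Measure X)
    (hbdd : ∀ s : Set X, Bornology.IsBounded s → m s < ⊤)
    (f : X → ℝ) (hf : LipBS f) (hnonneg : ∀ x, 0 ≤ f x) :
    (∀ᵐ t ∂(volume.restrict (Set.Ioi (0:ℝ))), perimeter m {x | t < f x} < ⊤) ∧
    ∫⁻ t in Set.Ioo (0:ℝ) (⨆ x, f x), perimeter m {x | t < f x} ≤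
      ∫⁻ x, ENNReal.ofReal (lipSlope f x) ∂m := by

  obtain ⟨⟨K, hK⟩, hsupp⟩ := hf
  -- σ-finiteness of m
  haveI hSF : SigmaFinite m := by
    rcases isEmpty_or_nonempty X with hX | hX
    · refine ⟨⟨⟨fun _ => Set.univ, fun _ => trivial, fun _ => ?_, Set.iUnion_const _⟩⟩⟩
      have : (Set.univ : Set X) = ∅ := Set.univ_eq_empty_iff.mpr hX
      rw [this]; simp
    · refine ⟨⟨⟨fun n => Metric.ball hX.some n, fun _ => trivial,
        fun n => hbdd _ Metric.isBounded_ball, Metric.iUnion_ball_nat _⟩⟩⟩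
  set M := ⨆ x, f x with hM
  set φ : X → ℝ≥0∞ := fun x => ENNReal.ofReal (lipSlope f x) with hφdef
  have hφ : Measurable φ := ENNReal.measurable_ofReal.comp (lipSlope_measurable hK)
  -- boundedness of f
  have hBdd : BddAbove (Set.range f) := by
    rcases (Function.support f).eq_empty_or_nonempty with hs | ⟨x₀, hx₀⟩
    · refine ⟨0, ?_⟩
      rintro v ⟨x, rfl⟩
      have : f = 0 := Function.support_eq_empty_iff.mp hs
      simp [this]
    · obtain ⟨r, hr⟩ := (Metric.isBounded_iff_subset_closedBall x₀).mp hsupp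
      refine ⟨|f x₀| + K * max r 0, ?_⟩
      rintro v ⟨x, rfl⟩
      by_cases hx : f x = 0
      · rw [hx]; positivity
      · have hxs : x ∈ Metric.closedBall x₀ r := hr hx
        have h1 : |f x - f x₀| ≤ K * dist x x₀ := by
          have := hK.dist_le_mul x x₀; rwa [Real.dist_eq] at this
        have h2 : dist x x₀ ≤ max r 0 := le_trans (Metric.mem_closedBall.mp hxs) (le_max_left _ _)
        have : f x ≤ |f x - f x₀| + |f x₀| := by
          calc f x ≤ |f x| := le_abs_self _
            _ = |(f x - f x₀) + f x₀| := by ring_nf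
            _ ≤ |f x - f x₀| + |f x₀| := abs_add_le _ _
        have h3 : (K:ℝ) * dist x x₀ ≤ K * max r 0 :=
          mul_le_mul_of_nonneg_left h2 K.coe_nonneg
        linarith
  have hfleM : ∀ x, f x ≤ M := fun x => le_ciSup hBdd x
  -- support estimates
  set S := closure (Function.support f) with hSdef
  have hSmeas : MeasurableSet S := isClosed_closure.measurableSet
  have hSfin : m S < ⊤ := hbdd S hsupp.closure
  have hφ_bound : ∀ x, φ x ≤ S.indicator (fun _ => (K : ℝ≥0∞)) x := by
    intro x
    by_cases hx : x ∈ S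
    · rw [Set.indicator_of_mem hx]
      exact le_trans (ENNReal.ofReal_le_ofReal (lipSlope_le_K hK))
        (by rw [ENNReal.ofReal_coe_nnreal])
    · rw [Set.indicator_of_notMem hx]
      have hx0 : f x = 0 := by
        by_contra h
        exact hx (subset_closure h)
      have hev : ∀ᶠ y in 𝓝 x, f y = f x := by
        have : Sᶜ ∈ 𝓝 x := isClosed_closure.isOpen_compl.mem_nhds hx
        filter_upwards [this] with y hy
        rw [hx0]
        by_contra h
        exact hy (subset_closure h)
      have := lipSlope_le_of_eventually_const hev
      simp [hφdef, ENNReal.ofReal_eq_zero.mpr this]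
  have hφfin : ∫⁻ x, φ x ∂m < ⊤ := by
    calc ∫⁻ x, φ x ∂m ≤ ∫⁻ x, S.indicator (fun _ => (K : ℝ≥0∞)) x ∂m := lintegral_mono hφ_bound
      _ = K * m S := lintegral_indicator_const hSmeas _
      _ < ⊤ := ENNReal.mul_lt_top ENNReal.coe_lt_top hSfin
  -- the comparison functions
  set ψ : ℕ → ℝ → X → ℝ≥0∞ := fun k t x =>
    if f x ∈ Set.Icc t (t + 1 / (k + 1)) then ((k : ℝ≥0∞) + 1) * φ x else 0 with hψdef
  have hfmeas : Measurable f := hK.continuous.measurable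
  have hψmeas : ∀ k, Measurable (Function.uncurry (ψ k)) := by
    intro k
    have heq : Function.uncurry (ψ k) = fun p : ℝ × X =>
        if f p.2 ∈ Set.Icc p.1 (p.1 + 1 / (k + 1)) then ((k : ℝ≥0∞) + 1) * φ p.2 else 0 := rfl
    rw [heq]
    refine Measurable.ite ?_ (measurable_const.mul (hφ.comp measurable_snd)) measurable_const
    have : {p : ℝ × X | f p.2 ∈ Set.Icc p.1 (p.1 + 1 / (k + 1))}
        = {p : ℝ × X | p.1 ≤ f p.2} ∩ {p : ℝ × X | f p.2 ≤ p.1 + 1 / (k + 1)} := by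
      ext p; simp [Set.mem_Icc]
    rw [this]
    exact (measurableSet_le measurable_fst (hfmeas.comp measurable_snd)).inter
      (measurableSet_le (hfmeas.comp measurable_snd) (measurable_fst.add measurable_const))
  have hH : ∀ k, Measurable fun t => ∫⁻ x, ψ k t x ∂m := fun k =>
    Measurable.lintegral_prod_right (hψmeas k)
  set G : ℝ → ℝ≥0∞ := fun t => Filter.liminf (fun k => ∫⁻ x, ψ k t x ∂m) atTop with hGdef
  have hG : Measurable G := Measurable.liminf hH
  have key : ∀ t, 0 < t → perimeter m {x | t < f x} ≤ G t := by
    intro t ht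
    set g : ℕ → X → ℝ := fun k x => min 1 (max 0 (((k:ℝ) + 1) * (f x - t))) with hgdef
    have habs : ∀ k x y, |g k y - g k x| ≤ ((k:ℝ) + 1) * |f y - f x| := by
      intro k x y
      calc |g k y - g k x|
          ≤ |max 0 (((k:ℝ)+1)*(f y - t)) - max 0 (((k:ℝ)+1)*(f x - t))| := by
            simpa using abs_min_sub_min_le_max (1:ℝ) (max 0 (((k:ℝ)+1)*(f y - t)))
              1 (max 0 (((k:ℝ)+1)*(f x - t)))
        _ ≤ |((k:ℝ)+1)*(f y - t) - ((k:ℝ)+1)*(f x - t)| := by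
            simpa [max_comm] using
              abs_max_sub_max_le_abs (((k:ℝ)+1)*(f y - t)) (((k:ℝ)+1)*(f x - t)) 0
        _ = ((k:ℝ)+1) * |f y - f x| := by
            rw [← mul_sub, abs_mul, abs_of_nonneg (by positivity : (0:ℝ) ≤ (k:ℝ)+1)]
            ring_nf
    have hg0 : ∀ k x, 0 ≤ g k x := fun k x => le_min zero_le_one (le_max_left _ _)
    have hg1 : ∀ k x, g k x ≤ 1 := fun k x => min_le_left _ _
    have hgLip : ∀ k : ℕ, LipschitzWith (((k:NNReal)+1) * K) (g k) := by
      intro k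
      refine LipschitzWith.of_dist_le_mul fun x y => ?_
      rw [Real.dist_eq]
      calc |g k x - g k y| ≤ ((k:ℝ)+1) * |f x - f y| := habs k y x
        _ ≤ ((k:ℝ)+1) * (K * dist x y) := by
            refine mul_le_mul_of_nonneg_left ?_ (by positivity)
            have := hK.dist_le_mul x y; rwa [Real.dist_eq] at this
        _ = (((k:NNReal)+1) * K : NNReal) * dist x y := by push_cast; ring
    have hgLoc : ∀ k, LipLoc (g k) := fun k s _ => ⟨_, (hgLip k).lipschitzOnWith⟩
    set A := {x | t < f x} with hA
    set B : ℕ → Set X := fun k => {x | t < f x} ∩ {x | f x < t + 1/((k:ℝ)+1)} with hB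
    have hBmeas : ∀ k, MeasurableSet (B k) :=
      fun k => (measurableSet_lt measurable_const hfmeas).inter
        (measurableSet_lt hfmeas measurable_const)
    have hBanti : Antitone B := by
      intro j k hjk x hx
      obtain ⟨hx1, hx2⟩ := hx
      refine ⟨hx1, ?_⟩
      simp only [Set.mem_setOf_eq] at hx2 ⊢
      have hd : 1/((k:ℝ)+1) ≤ 1/((j:ℝ)+1) := by
        apply one_div_le_one_div_of_le (by positivity)
        linarith [(Nat.cast_le (α := ℝ)).mpr hjk]
      linarith
    have hBfin : m (B 0) ≠ ⊤ := by
      refine (hbdd _ (hsupp.subset ?_)).ne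
      intro x hx
      exact ne_of_gt (lt_trans ht hx.1)
    have hBint : ⋂ k, B k = ∅ := by
      rw [Set.eq_empty_iff_forall_notMem]
      intro x hx
      have hx0 : t < f x := (Set.mem_iInter.mp hx 0).1
      obtain ⟨n, hn⟩ := exists_nat_one_div_lt (show (0:ℝ) < f x - t by linarith)
      have h2 : f x < t + 1/((n:ℝ)+1) := (Set.mem_iInter.mp hx n).2
      linarith
    have hBlim : Tendsto (fun k => m (B k)) atTop (𝓝 0) := by
      have h := tendsto_measure_iInter_atTop
        (fun k => (hBmeas k).nullMeasurableSet) hBanti ⟨0, hBfin⟩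
      rw [hBint, measure_empty] at h
      exact h
    have hpoint : ∀ k x, ENNReal.ofReal |g k x - A.indicator (fun _ => (1:ℝ)) x|
        ≤ (B k).indicator (fun _ => (1:ℝ≥0∞)) x := by
      intro k x
      by_cases h1 : f x ≤ t
      · have hgx : g k x = 0 := by
          have hu : ((k:ℝ)+1) * (f x - t) ≤ 0 :=
            mul_nonpos_of_nonneg_of_nonpos (by positivity) (by linarith)
          simp only [hgdef]
          rw [max_eq_left hu, min_eq_right zero_le_one]
        have hAx : A.indicator (fun _ => (1:ℝ)) x = 0 :=
          Set.indicator_of_notMem (by simp [hA]; linarith) _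
        simp [hgx, hAx]
      · push_neg at h1
        have hAx : A.indicator (fun _ => (1:ℝ)) x = 1 :=
          Set.indicator_of_mem (by simp [hA, h1]) _
        by_cases h2 : f x < t + 1/((k:ℝ)+1)
        · have hBx : (B k).indicator (fun _ => (1:ℝ≥0∞)) x = 1 :=
            Set.indicator_of_mem (Set.mem_inter (by exact h1) (by exact h2)) _
          rw [hBx, hAx]
          refine ENNReal.ofReal_le_one.mpr (abs_le.mpr ⟨?_, ?_⟩)
          · have := hg0 k x; linarith
          · have := hg1 k x; linarith
        · push_neg at h2
          have hgx : g k x = 1 := by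
            have hone : ((k:ℝ)+1) * (1/((k:ℝ)+1)) = 1 := by
              field_simp
            have hu : (1:ℝ) ≤ ((k:ℝ)+1) * (f x - t) := by
              calc (1:ℝ) = ((k:ℝ)+1) * (1/((k:ℝ)+1)) := hone.symm
                _ ≤ ((k:ℝ)+1) * (f x - t) :=
                  mul_le_mul_of_nonneg_left (by linarith) (by positivity)
            simp only [hgdef]
            rw [max_eq_right (le_trans zero_le_one hu), min_eq_left hu]
          rw [hgx, hAx]
          simp
    have hL1 : Tendsto (fun k => ∫⁻ x, ENNReal.ofReal
        |g k x - A.indicator (fun _ => (1:ℝ)) x| ∂m) atTop (𝓝 0) := by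
      refine tendsto_of_tendsto_of_tendsto_of_le_of_le tendsto_const_nhds hBlim
        (fun k => zero_le) (fun k => ?_)
      calc ∫⁻ x, ENNReal.ofReal |g k x - A.indicator (fun _ => (1:ℝ)) x| ∂m
          ≤ ∫⁻ x, (B k).indicator (fun _ => (1:ℝ≥0∞)) x ∂m := lintegral_mono (hpoint k)
        _ = 1 * m (B k) := lintegral_indicator_const (hBmeas k) _
        _ = m (B k) := one_mul _
    have hmem : perimeter m A ≤ Filter.liminf
        (fun k => ∫⁻ x, ENNReal.ofReal (lipSlope (g k) x) ∂m) atTop :=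
      sInf_le ⟨g, hgLoc, hL1, rfl⟩
    have hslope : ∀ k x, ENNReal.ofReal (lipSlope (g k) x) ≤ ψ k t x := by
      intro k x
      by_cases h1 : f x < t
      · have hev : ∀ᶠ y in 𝓝 x, g k y = g k x := by
          filter_upwards [(isOpen_Iio.preimage hK.continuous).mem_nhds h1] with y hy
          have hy' : f y < t := hy
          have h0 : ∀ z : X, f z < t → g k z = 0 := by
            intro z hz
            have hu : ((k:ℝ)+1) * (f z - t) ≤ 0 :=
              mul_nonpos_of_nonneg_of_nonpos (by positivity) (by linarith)
            simp only [hgdef]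
            rw [max_eq_left hu, min_eq_right zero_le_one]
          rw [h0 y hy', h0 x h1]
        rw [ENNReal.ofReal_eq_zero.mpr (lipSlope_le_of_eventually_const hev)]
        exact zero_le
      · by_cases h2 : t + 1/((k:ℝ)+1) < f x
        · have hev : ∀ᶠ y in 𝓝 x, g k y = g k x := by
            filter_upwards [(isOpen_Ioi.preimage hK.continuous).mem_nhds h2] with y hy
            have h0 : ∀ z : X, t + 1/((k:ℝ)+1) < f z → g k z = 1 := by
              intro z hz
              have hone : ((k:ℝ)+1) * (1/((k:ℝ)+1)) = 1 := by field_simp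
              have hu : (1:ℝ) ≤ ((k:ℝ)+1) * (f z - t) := by
                calc (1:ℝ) = ((k:ℝ)+1) * (1/((k:ℝ)+1)) := hone.symm
                  _ ≤ ((k:ℝ)+1) * (f z - t) :=
                    mul_le_mul_of_nonneg_left (by linarith) (by positivity)
              simp only [hgdef]
              rw [max_eq_right (le_trans zero_le_one hu), min_eq_left hu]
            rw [h0 y hy, h0 x h2]
          rw [ENNReal.ofReal_eq_zero.mpr (lipSlope_le_of_eventually_const hev)]
          exact zero_le
        · push_neg at h1 h2
          have hIcc : f x ∈ Set.Icc t (t + 1/((k:ℝ)+1)) := ⟨h1, h2⟩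
          have hlip : lipSlope (g k) x ≤ ((k:ℝ)+1) * lipSlope f x :=
            lipSlope_le_mul hK (by positivity) (fun y => habs k x y)
          calc ENNReal.ofReal (lipSlope (g k) x)
              ≤ ENNReal.ofReal (((k:ℝ)+1) * lipSlope f x) := ENNReal.ofReal_le_ofReal hlip
            _ = ENNReal.ofReal ((k:ℝ)+1) * φ x := ENNReal.ofReal_mul (by positivity)
            _ = ((k:ℝ≥0∞)+1) * φ x := by
                rw [ENNReal.ofReal_add (by positivity) zero_le_one,
                  ENNReal.ofReal_natCast, ENNReal.ofReal_one]
            _ = ψ k t x := by simp only [hψdef, if_pos hIcc]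
    refine hmem.trans ?_
    exact Filter.liminf_le_liminf
      (Eventually.of_forall (fun k => lintegral_mono fun x => hslope k x))
  have hone : ∀ k : ℕ, ((k:ℝ≥0∞)+1) * ENNReal.ofReal (1/((k:ℝ)+1)) = 1 := by
    intro k
    have h1 : ENNReal.ofReal (1/((k:ℝ)+1)) = ((k:ℝ≥0∞)+1)⁻¹ := by
      rw [one_div, ENNReal.ofReal_inv_of_pos (by positivity),
        ENNReal.ofReal_add (by positivity) zero_le_one,
        ENNReal.ofReal_natCast, ENNReal.ofReal_one]
    rw [h1, ENNReal.mul_inv_cancel (by simp) (by simp)]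
  have hchain2 : ∀ k, (∫⁻ t in Set.Ioo (0:ℝ) M, ∫⁻ x, ψ k t x ∂m) ≤ ∫⁻ x, φ x ∂m := by
    intro k
    rw [lintegral_lintegral_swap ((hψmeas k).aemeasurable)]
    refine lintegral_mono fun x => ?_
    have hfun : (fun t => ψ k t x) = (Set.Icc (f x - 1/((k:ℝ)+1)) (f x)).indicator
        (fun _ => ((k:ℝ≥0∞)+1) * φ x) := by
      funext s
      by_cases h : f x ∈ Set.Icc s (s + 1/((k:ℝ)+1))
      · simp only [hψdef, if_pos h]
        rw [Set.indicator_of_mem (Set.mem_Icc.mpr ⟨by linarith [h.2], h.1⟩)]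
      · simp only [hψdef, if_neg h]
        rw [Set.indicator_of_notMem]
        intro hc
        rw [Set.mem_Icc] at hc
        exact h (Set.mem_Icc.mpr ⟨hc.2, by linarith [hc.1]⟩)
    rw [hfun]
    calc (∫⁻ s in Set.Ioo (0:ℝ) M, (Set.Icc (f x - 1/((k:ℝ)+1)) (f x)).indicator
          (fun _ => ((k:ℝ≥0∞)+1) * φ x) s)
        = ((k:ℝ≥0∞)+1) * φ x *
            (volume.restrict (Set.Ioo (0:ℝ) M)) (Set.Icc (f x - 1/((k:ℝ)+1)) (f x)) :=
          lintegral_indicator_const measurableSet_Icc _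
      _ ≤ ((k:ℝ≥0∞)+1) * φ x * volume (Set.Icc (f x - 1/((k:ℝ)+1)) (f x)) :=
          mul_le_mul_right (Measure.restrict_apply_le _ _) _
      _ = ((k:ℝ≥0∞)+1) * φ x * ENNReal.ofReal (1/((k:ℝ)+1)) := by
          rw [Real.volume_Icc]; norm_num
      _ = φ x * (((k:ℝ≥0∞)+1) * ENNReal.ofReal (1/((k:ℝ)+1))) := by ring
      _ = φ x := by rw [hone k, mul_one]
  have hmain2 : (∫⁻ t in Set.Ioo (0:ℝ) M, G t) ≤ ∫⁻ x, φ x ∂m := by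
    calc (∫⁻ t in Set.Ioo (0:ℝ) M, G t)
        ≤ Filter.liminf (fun k => ∫⁻ t in Set.Ioo (0:ℝ) M, ∫⁻ x, ψ k t x ∂m) atTop :=
          lintegral_liminf_le hH
      _ ≤ Filter.liminf (fun _ : ℕ => ∫⁻ x, φ x ∂m) atTop :=
          Filter.liminf_le_liminf (Eventually.of_forall hchain2)
      _ = ∫⁻ x, φ x ∂m := Filter.liminf_const _
  constructor
  · have hGfin : (∫⁻ t in Set.Ioo (0:ℝ) M, G t) ≠ ⊤ := (lt_of_le_of_lt hmain2 hφfin).ne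
    have h1 : ∀ᵐ t ∂(volume.restrict (Set.Ioo (0:ℝ) M)), G t < ⊤ := ae_lt_top hG hGfin
    have h1' : ∀ᵐ t ∂(volume : Measure ℝ), t ∈ Set.Ioo (0:ℝ) M → G t < ⊤ :=
      (ae_restrict_iff' measurableSet_Ioo).mp h1
    have h2 : ∀ᵐ t ∂(volume : Measure ℝ), t ≠ M := by
      rw [ae_iff]
      simp only [ne_eq, not_not]
      simpa [Set.setOf_eq_eq_singleton] using measure_singleton M
    have hempty : ∀ t : ℝ, M < t → {x | t < f x} = ∅ := by
      intro t ht'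
      rw [Set.eq_empty_iff_forall_notMem]
      intro x hx
      exact absurd hx (not_lt.mpr (le_trans (hfleM x) ht'.le))
    refine (ae_restrict_iff' measurableSet_Ioi).mpr ?_
    filter_upwards [h1', h2] with t hIoo hne ht
    rcases lt_trichotomy t M with h | h | h
    · exact lt_of_le_of_lt (key t ht) (hIoo ⟨ht, h⟩)
    · exact absurd h hne
    · rw [hempty t h, perimeter_empty]
      simp
  · exact le_trans (setLIntegral_mono hG (fun t htt => key t htt.1)) hmain2
end

section
/- Let (X,d) be a complete separable metric space and m a nonnegative Borel measure on X, finite on bounded sets, with m(X) = 1. Let K > 0 and suppose the Gaussian isoperimetric inequality Per(E) ≥ I_K(m(E)) holds for every Borel set E ⊆ X. Then (X,d,m) admits a superlinear isoperimetric profile, i.e. there exists ω : (0,∞) → (0,1/2] such that for every ε > 0 and every Borel set E ⊆ X, m(E) ≤ ω(ε) implies m(E) ≤ ε·Per(E). -/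
open MeasureTheory Filter Topology ENNReal

/-- The Gaussian cumulative distribution function `Φ_K`. -/
noncomputable def PhiK (K : ℝ) (x : ℝ) : ℝ :=
  Real.sqrt (K / (2 * Real.pi)) * ∫ t in Set.Iic x, Real.exp (-K * t ^ 2 / 2)

/-- The Gaussian density `φ_K := Φ_K′`. -/
noncomputable def phiK (K : ℝ) : ℝ → ℝ := deriv (PhiK K)

/-- The Gaussian isoperimetric profile `I_K := φ_K ∘ Φ_K^{-1}`. -/
noncomputable def gaussianIsopProfile (K : ℝ) (p : ℝ) : ℝ :=
  phiK K (Function.invFun (PhiK K) p)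

section GaussAux
open Set

noncomputable def gaussFn (K : ℝ) (t : ℝ) : ℝ := Real.exp (-K * t ^ 2 / 2)

lemma gaussFn_eq (K t : ℝ) : gaussFn K t = Real.exp (-(K/2) * t^2) := by
  unfold gaussFn; ring_nf

lemma gaussFn_pos (K t : ℝ) : 0 < gaussFn K t := Real.exp_pos _

lemma gaussFn_le_one {K : ℝ} (hK : 0 < K) (t : ℝ) : gaussFn K t ≤ 1 := by
  unfold gaussFn
  rw [Real.exp_le_one_iff]
  have : 0 ≤ K * t ^ 2 := by positivity
  linarith

lemma integrable_gaussFn {K : ℝ} (hK : 0 < K) : Integrable (gaussFn K) := by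
  have h := integrable_exp_neg_mul_sq (show (0:ℝ) < K/2 by linarith)
  exact h.congr (Filter.Eventually.of_forall fun t => (gaussFn_eq K t).symm)

lemma integrable_mul_gaussFn {K : ℝ} (hK : 0 < K) :
    Integrable (fun t => t * gaussFn K t) := by
  have h := integrable_mul_exp_neg_mul_sq (show (0:ℝ) < K/2 by linarith)
  exact h.congr (Filter.Eventually.of_forall fun t => by simp only [gaussFn_eq])

lemma hasDerivAt_gaussFn (K t : ℝ) :
    HasDerivAt (gaussFn K) (-K * t * gaussFn K t) t := by
  have h1 : HasDerivAt (fun t : ℝ => -K * t ^ 2 / 2) (-K * t) t := by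
    have := ((hasDerivAt_pow 2 t).const_mul (-K)).div_const 2
    refine this.congr_deriv ?_
    norm_num
    ring
  have := (Real.hasDerivAt_exp (-K * t ^ 2 / 2)).comp t h1
  refine this.congr_deriv ?_
  unfold gaussFn
  ring

lemma continuous_gaussFn (K : ℝ) : Continuous (gaussFn K) := by
  unfold gaussFn; fun_prop

lemma tendsto_gaussFn_atBot {K : ℝ} (hK : 0 < K) :
    Tendsto (gaussFn K) atBot (𝓝 0) := by
  have h1 : Tendsto (fun t : ℝ => t ^ 2) atBot atTop := by
    have := Filter.Tendsto.atBot_mul_atBot₀ (tendsto_id (α := ℝ)) tendsto_id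
    exact this.congr fun t => (pow_two t).symm
  have h2 : Tendsto (fun t : ℝ => -K * t ^ 2 / 2) atBot atBot := by
    have := h1.const_mul_atTop_of_neg (show -(K/2) < 0 by linarith)
    refine this.congr fun t => by ring
  exact (Real.tendsto_exp_atBot).comp h2

lemma integral_mul_gaussFn_Iic {K : ℝ} (hK : 0 < K) (x : ℝ) :
    ∫ t in Iic x, t * gaussFn K t = -(gaussFn K x) / K := by
  have hderiv : ∀ t ∈ Iic x, HasDerivAt (fun s => -(gaussFn K s) / K) (t * gaussFn K t) t := by
    intro t _
    have := ((hasDerivAt_gaussFn K t).neg).div_const K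
    refine this.congr_deriv ?_
    field_simp
  have htend : Tendsto (fun s => -(gaussFn K s) / K) atBot (𝓝 0) := by
    have := ((tendsto_gaussFn_atBot hK).neg).div_const K
    simpa using this
  have := integral_Iic_of_hasDerivAt_of_tendsto' hderiv
    ((integrable_mul_gaussFn hK).integrableOn) htend
  simpa using this

lemma mills_bound {K : ℝ} (hK : 0 < K) {x : ℝ} (hx : x < 0) :
    ∫ t in Iic x, gaussFn K t ≤ gaussFn K x / (K * (-x)) := by
  have hint1 : IntegrableOn (gaussFn K) (Iic x) := (integrable_gaussFn hK).integrableOn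
  have hint2 : IntegrableOn (fun t => (1/x) * (t * gaussFn K t)) (Iic x) :=
    ((integrable_mul_gaussFn hK).const_mul (1/x)).integrableOn
  have hmono : ∫ t in Iic x, gaussFn K t ≤ ∫ t in Iic x, (1/x) * (t * gaussFn K t) := by
    refine setIntegral_mono_on hint1 hint2 measurableSet_Iic ?_
    intro t ht
    have ht' : t ≤ x := ht
    have h1 : (1:ℝ) ≤ t / x := by
      rw [le_div_iff_of_neg hx]
      linarith
    have h2 : (1/x) * (t * gaussFn K t) = (t/x) * gaussFn K t := by ring
    rw [h2]
    exact le_mul_of_one_le_left (gaussFn_pos K t).le h1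
  have heq : ∫ t in Iic x, (1/x) * (t * gaussFn K t)
      = (1/x) * ∫ t in Iic x, t * gaussFn K t := integral_const_mul _ _
  rw [heq, integral_mul_gaussFn_Iic hK] at hmono
  have heq2 : (1/x) * (-(gaussFn K x) / K) = gaussFn K x / (K * (-x)) := by
    field_simp
  linarith [heq2 ▸ hmono]

lemma PhiK_eq (K x : ℝ) :
    PhiK K x = Real.sqrt (K / (2 * Real.pi)) * ∫ t in Iic x, gaussFn K t := rfl

lemma hasDerivAt_PhiK {K : ℝ} (hK : 0 < K) (x : ℝ) :
    HasDerivAt (PhiK K) (Real.sqrt (K / (2 * Real.pi)) * gaussFn K x) x := by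
  have hrepr : ∀ y : ℝ, (∫ t in Iic y, gaussFn K t)
      = (∫ t in Iic (0:ℝ), gaussFn K t) + ∫ t in (0:ℝ)..y, gaussFn K t := by
    intro y
    have := intervalIntegral.integral_Iic_sub_Iic
      ((integrable_gaussFn hK).integrableOn (s := Iic (0:ℝ)))
      ((integrable_gaussFn hK).integrableOn (s := Iic y))
    linarith
  have hD : HasDerivAt (fun y => ∫ t in Iic y, gaussFn K t) (gaussFn K x) x := by
    have h := intervalIntegral.integral_hasDerivAt_right (a := (0:ℝ)) (b := x)
      ((integrable_gaussFn hK).intervalIntegrable)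
      ((continuous_gaussFn K).stronglyMeasurableAtFilter _ _)
      ((continuous_gaussFn K).continuousAt)
    have := (h.const_add (∫ t in Iic (0:ℝ), gaussFn K t))
    exact this.congr_of_eventuallyEq (Filter.Eventually.of_forall fun y => hrepr y)
  exact hD.const_mul _

lemma phiK_eq {K : ℝ} (hK : 0 < K) (x : ℝ) :
    phiK K x = Real.sqrt (K / (2 * Real.pi)) * gaussFn K x :=
  (hasDerivAt_PhiK hK x).deriv

lemma sqrtc_pos {K : ℝ} (hK : 0 < K) : 0 < Real.sqrt (K / (2 * Real.pi)) :=
  Real.sqrt_pos.mpr (div_pos hK (by positivity))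

lemma strictMono_PhiK {K : ℝ} (hK : 0 < K) : StrictMono (PhiK K) := by
  apply strictMono_of_deriv_pos
  intro x
  rw [(hasDerivAt_PhiK hK x).deriv]
  exact mul_pos (sqrtc_pos hK) (gaussFn_pos K x)

lemma continuous_PhiK {K : ℝ} (hK : 0 < K) : Continuous (PhiK K) :=
  continuous_iff_continuousAt.mpr fun x => (hasDerivAt_PhiK hK x).continuousAt

lemma PhiK_pos {K : ℝ} (hK : 0 < K) (x : ℝ) : 0 < PhiK K x := by
  rw [PhiK_eq]
  refine mul_pos (sqrtc_pos hK) ?_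
  rw [setIntegral_pos_iff_support_of_nonneg_ae
    (Filter.Eventually.of_forall fun t => (gaussFn_pos K t).le)
    ((integrable_gaussFn hK).integrableOn)]
  have : Function.support (gaussFn K) = Set.univ :=
    Set.eq_univ_of_forall fun t => (gaussFn_pos K t).ne'
  rw [this, Set.univ_inter, Real.volume_Iic]
  exact ENNReal.zero_lt_top

lemma PhiK_le_mills {K : ℝ} (hK : 0 < K) {x : ℝ} (hx : x < 0) :
    PhiK K x ≤ Real.sqrt (K / (2 * Real.pi)) * gaussFn K x / (K * (-x)) := by
  rw [PhiK_eq]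
  have := mills_bound hK hx
  have hc := (sqrtc_pos hK).le
  calc Real.sqrt (K / (2 * Real.pi)) * ∫ t in Iic x, gaussFn K t
      ≤ Real.sqrt (K / (2 * Real.pi)) * (gaussFn K x / (K * (-x))) :=
        mul_le_mul_of_nonneg_left this hc
    _ = Real.sqrt (K / (2 * Real.pi)) * gaussFn K x / (K * (-x)) := by ring

end GaussAux

/-- If `(X,d,m)` is a complete separable metric measure space with `m(X) = 1`, `m` finite on
bounded sets, `K > 0`, and the Gaussian isoperimetric inequality `Per(E) ≥ I_K(m(E))` holds
for every Borel set `E`, then `(X,d,m)` admits a superlinear isoperimetric profile. -/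
theorem superlinear_profile_of_gaussian_isoperimetry
    {X : Type*} [MetricSpace X] [CompleteSpace X]
    [TopologicalSpace.SeparableSpace X] [MeasurableSpace X] [BorelSpace X]
    (m : Measure X)
    (hbdd : ∀ s : Set X, Bornology.IsBounded s → m s < ⊤)
    (hprob : m Set.univ = 1)
    (K : ℝ) (hK : 0 < K)
    (hGauss : ∀ E : Set X, MeasurableSet E →
      ENNReal.ofReal (gaussianIsopProfile K (m E).toReal) ≤ perimeter m E) :
    ∃ ω : ℝ → ℝ, (∀ ε : ℝ, 0 < ε → 0 < ω ε ∧ ω ε ≤ 1 / 2) ∧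
      ∀ ε : ℝ, 0 < ε → ∀ E : Set X, MeasurableSet E →
        m E ≤ ENNReal.ofReal (ω ε) → m E ≤ ENNReal.ofReal ε * perimeter m E := by
  set c := Real.sqrt (K / (2 * Real.pi)) with hc_def
  have hc : 0 < c := sqrtc_pos hK
  refine ⟨fun ε => min (PhiK K (-(1/(K*ε)))) (1/2), ?_, ?_⟩
  · intro ε hε
    exact ⟨lt_min (PhiK_pos hK _) (by norm_num), min_le_right _ _⟩
  · intro ε hε E hE hme
    rcases eq_or_ne (m E) 0 with h0 | hne
    · rw [h0]; exact zero_le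
    set xε : ℝ := -(1/(K*ε)) with hxε_def
    have hxε0 : xε < 0 := by
      have : 0 < 1/(K*ε) := by positivity
      rw [hxε_def]; linarith
    have hωpos : 0 < min (PhiK K xε) (1/2) := lt_min (PhiK_pos hK _) (by norm_num)
    have hfin : m E ≠ ⊤ := (lt_of_le_of_lt hme ENNReal.ofReal_lt_top).ne
    set p := (m E).toReal with hp_def
    have hp0 : 0 < p := ENNReal.toReal_pos hne hfin
    have hpω : p ≤ min (PhiK K xε) (1/2) := ENNReal.toReal_le_of_le_ofReal hωpos.le hme
    have hpΦ : p ≤ PhiK K xε := hpω.trans (min_le_left _ _)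
    -- find a preimage point for `p` under `PhiK K`
    set y : ℝ := min xε (-(c/(K*p)) - 1) with hy_def
    have hyx : y ≤ xε := min_le_left _ _
    have hy0 : y < 0 := lt_of_le_of_lt hyx hxε0
    have hylt : PhiK K y < p := by
      have h1 : PhiK K y ≤ c * gaussFn K y / (K * (-y)) := PhiK_le_mills hK hy0
      have hyb : c/(K*p) + 1 ≤ -y := by
        have h := min_le_right xε (-(c/(K*p)) - 1)
        rw [← hy_def] at h
        linarith
      have hcp : 0 ≤ c/(K*p) := by positivity
      have hKy : 0 < K * (-y) := mul_pos hK (by linarith)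
      have h3 : c * gaussFn K y ≤ c := mul_le_of_le_one_right hc.le (gaussFn_le_one hK y)
      have h4 : c / (K * (-y)) < p := by
        rw [div_lt_iff₀ hKy]
        have hKp : 0 < K * p := mul_pos hK hp0
        calc c = (K*p) * (c/(K*p)) := by field_simp
          _ < (K*p) * (-y) := by
              apply mul_lt_mul_of_pos_left _ hKp
              linarith
          _ = p * (K * -y) := by ring
      calc PhiK K y ≤ c * gaussFn K y / (K * -y) := h1
        _ ≤ c / (K * -y) := by gcongr
        _ < p := h4
    obtain ⟨x₀, hx₀mem, hx₀⟩ :=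
      intermediate_value_Icc hyx ((continuous_PhiK hK).continuousOn) ⟨hylt.le, hpΦ⟩
    set z := Function.invFun (PhiK K) p with hz_def
    have hz : PhiK K z = p := by
      rw [hz_def]; exact Function.invFun_eq ⟨x₀, hx₀⟩
    have hzle : z ≤ xε := (strictMono_PhiK hK).le_iff_le.mp (by rw [hz]; exact hpΦ)
    have hz0 : z < 0 := lt_of_le_of_lt hzle hxε0
    have hmills : p ≤ c * gaussFn K z / (K * (-z)) := by
      have := PhiK_le_mills hK hz0
      rwa [hz] at this
    have hI : gaussianIsopProfile K p = c * gaussFn K z := by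
      show phiK K (Function.invFun (PhiK K) p) = c * gaussFn K z
      rw [← hz_def, phiK_eq hK]
    have hKz : 0 < K * (-z) := mul_pos hK (by linarith)
    have hKzε : 1/ε ≤ K * (-z) := by
      have h1 : K * (-xε) ≤ K * (-z) := by nlinarith
      have h2 : K * (-xε) = 1/ε := by
        rw [hxε_def]
        field_simp
      rw [← h2]
      exact h1
    have h5 : p * (K * -z) ≤ c * gaussFn K z := (le_div_iff₀ hKz).mp hmills
    have hple : p ≤ ε * gaussianIsopProfile K p := by
      rw [hI]
      have h6 : p * (1/ε) ≤ c * gaussFn K z :=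
        le_trans (mul_le_mul_of_nonneg_left hKzε hp0.le) h5
      have h7 := mul_le_mul_of_nonneg_left h6 hε.le
      calc p = ε * (p * (1/ε)) := by field_simp
        _ ≤ ε * (c * gaussFn K z) := h7
    calc m E = ENNReal.ofReal p := (ENNReal.ofReal_toReal hfin).symm
      _ ≤ ENNReal.ofReal (ε * gaussianIsopProfile K p) := ENNReal.ofReal_le_ofReal hple
      _ = ENNReal.ofReal ε * ENNReal.ofReal (gaussianIsopProfile K p) :=
          ENNReal.ofReal_mul hε.le
      _ ≤ ENNReal.ofReal ε * perimeter m E := by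
          rw [hp_def]
          exact mul_le_mul_right (hGauss E hE) _
end

section
/- For every K > 0, the Gaussian isoperimetric profile satisfies the asymptotic lim_{x→0⁺} I_K(x) / ( x·√(2K·log(1/x)) ) = 1. -/
open Filter Topology

open Real MeasureTheory Set

set_option maxHeartbeats 1000000

namespace GaussAsymp

variable {K : ℝ} (hK : 0 < K)

/-- The unnormalized density. -/
noncomputable def g (K : ℝ) (t : ℝ) : ℝ := Real.exp (-K * t ^ 2 / 2)

lemma g_eq : g K = fun t => Real.exp (-(K/2) * t ^ 2) := by
  funext t; unfold g; ring_nf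

lemma g_pos (t : ℝ) : 0 < g K t := Real.exp_pos _

include hK

lemma g_integrable : Integrable (g K) := by
  have := integrable_exp_neg_mul_sq (half_pos hK)
  rw [g_eq]; exact this

lemma g_cont : Continuous (g K) := by
  unfold g; fun_prop

/-- unnormalized CDF -/
noncomputable def G (K : ℝ) (x : ℝ) : ℝ := ∫ t in Set.Iic x, g K t

lemma hasDerivAt_G (x : ℝ) : HasDerivAt (G K) (g K x) x := by
  have hint : ∀ y : ℝ, IntegrableOn (g K) (Iic y) := fun y =>
    (g_integrable hK).integrableOn
  have key : ∀ y : ℝ, G K y = G K 0 + ∫ t in (0:ℝ)..y, g K t := by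
    intro y
    rw [← intervalIntegral.integral_Iic_sub_Iic (hint 0) (hint y)]
    unfold G; ring
  have h2 : HasDerivAt (fun y => G K 0 + ∫ t in (0:ℝ)..y, g K t) (g K x) x := by
    have := intervalIntegral.integral_hasDerivAt_right
      ((g_integrable hK).intervalIntegrable (a := 0) (b := x))
      ((g_cont hK).stronglyMeasurableAtFilter _ _)
      (g_cont hK).continuousAt
    simpa using this.const_add (G K 0)
  exact h2.congr_deriv rfl |>.congr_of_eventuallyEq (Filter.Eventually.of_forall fun y => (key y))


/-- normalization constant -/
noncomputable def c (K : ℝ) : ℝ := Real.sqrt (K / (2 * Real.pi))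

lemma c_pos : 0 < c K := by
  unfold c
  have := Real.pi_pos
  positivity

omit hK in
lemma PhiK_eq (x : ℝ) : PhiK K x = c K * G K x := rfl

lemma hasDerivAt_PhiK (x : ℝ) : HasDerivAt (PhiK K) (c K * g K x) x := by
  simp only [funext fun x => PhiK_eq (K := K) x]
  exact (hasDerivAt_G hK x).const_mul (c K)

lemma phiK_eq (x : ℝ) : phiK K x = c K * g K x := (hasDerivAt_PhiK hK x).deriv

lemma continuous_PhiK : Continuous (PhiK K) :=
  continuous_iff_continuousAt.2 fun x => (hasDerivAt_PhiK hK x).continuousAt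

lemma strictMono_PhiK : StrictMono (PhiK K) := by
  apply strictMono_of_deriv_pos
  intro x
  rw [(hasDerivAt_PhiK hK x).deriv]
  exact mul_pos (c_pos hK) (g_pos x)

lemma G_pos (x : ℝ) : 0 < G K x := by
  unfold G
  rw [MeasureTheory.setIntegral_pos_iff_support_of_nonneg_ae
    (Filter.Eventually.of_forall fun t => (g_pos t).le) (g_integrable hK).integrableOn]
  have : Function.support (g K) = Set.univ := by
    ext t; simp [Function.support, (g_pos (K := K) t).ne']
  rw [this, Set.univ_inter]
  simp [Real.volume_Iic]

lemma PhiK_pos (x : ℝ) : 0 < PhiK K x :=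
  mul_pos (c_pos hK) (G_pos hK x)

lemma integral_g : ∫ t, g K t = Real.sqrt (2 * Real.pi / K) := by
  rw [g_eq, integral_gaussian]
  congr 1
  field_simp

lemma c_mul_integral_g : c K * ∫ t, g K t = 1 := by
  rw [integral_g hK]
  unfold c
  rw [← Real.sqrt_mul (by positivity)]
  rw [show K / (2 * Real.pi) * (2 * Real.pi / K) = 1 by
    field_simp]
  exact Real.sqrt_one

lemma PhiK_le_one (x : ℝ) : PhiK K x ≤ 1 := by
  rw [PhiK_eq, ← c_mul_integral_g hK]
  apply mul_le_mul_of_nonneg_left _ (c_pos hK).le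
  exact MeasureTheory.setIntegral_le_integral (g_integrable hK)
    (Filter.Eventually.of_forall fun t => (g_pos t).le)

lemma PhiK_lt_one (x : ℝ) : PhiK K x < 1 :=
  lt_of_lt_of_le (strictMono_PhiK hK (lt_add_one x)) (PhiK_le_one hK (x + 1))

lemma tendsto_PhiK_atTop : Tendsto (PhiK K) atTop (𝓝 1) := by
  have h := (MeasureTheory.aecover_Iic (μ := volume) (l := atTop)
    tendsto_id).integral_tendsto_of_countably_generated (g_integrable hK)
  have := h.const_mul (c K)
  rw [c_mul_integral_g hK] at this
  exact this


lemma hasDerivAt_g (t : ℝ) : HasDerivAt (g K) (-K * t * g K t) t := by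
  have h1 : HasDerivAt (fun t : ℝ => -K * t ^ 2 / 2) (-K * t) t := by
    have := ((hasDerivAt_pow 2 t).const_mul (-K)).div_const 2
    exact this.congr_deriv (by norm_num; ring)
  have h2 := h1.exp
  unfold g
  convert h2 using 1
  ring

omit hK in
lemma tendsto_sq_atBot : Tendsto (fun t : ℝ => t ^ 2) atBot atTop := by
  exact ((tendsto_pow_atTop (n := 2) two_ne_zero).comp
    (tendsto_abs_atBot_atTop (G := ℝ))).congr fun t => by simp [Function.comp, sq_abs]

lemma tendsto_g_atBot : Tendsto (g K) atBot (𝓝 0) := by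
  rw [g_eq]
  have h3 : Tendsto (fun t : ℝ => -(K/2) * t ^ 2) atBot atBot :=
    (tendsto_const_mul_atBot_of_neg (r := -(K/2)) (f := fun t : ℝ => t ^ 2)
      (by linarith)).2 tendsto_sq_atBot
  exact Real.tendsto_exp_atBot.comp h3

lemma integral_neg_mul_g {x : ℝ} (hx : x < 0) :
    ∫ t in Set.Iic x, (-t) * g K t = g K x / K := by
  have tends : Tendsto (fun t => g K t / K) atBot (𝓝 0) := by
    simpa using (tendsto_g_atBot hK).div_const K
  have hderiv : ∀ t ∈ Set.Iic x, HasDerivAt (fun t => g K t / K) ((-t) * g K t) t := by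
    intro t _
    have := (hasDerivAt_g hK t).div_const K
    exact this.congr_deriv (by field_simp)
  have hint : IntegrableOn (fun t => (-t) * g K t) (Set.Iic x) := by
    have h0 := (integrable_mul_exp_neg_mul_sq (half_pos hK)).neg
    refine (h0.congr (Filter.Eventually.of_forall fun t => ?_)).integrableOn
    rw [g_eq]
    simp only [Pi.neg_apply]
    ring
  have := MeasureTheory.integral_Iic_of_hasDerivAt_of_tendsto' hderiv hint tends
  rw [this, sub_zero]

lemma integral_corr_g {x : ℝ} (hx : x < 0) :
    ∫ t in Set.Iic x, (1 + 1/(K * t ^ 2)) * g K t = g K x / (K * (-x)) := by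
  have hx0 : x ≠ 0 := hx.ne
  set f : ℝ → ℝ := fun t => g K t / (-(K * t)) with hf
  have hderiv : ∀ t ∈ Set.Iio x, HasDerivAt f ((1 + 1/(K * t ^ 2)) * g K t) t := by
    intro t ht
    have htne : t ≠ 0 := ne_of_lt (ht.trans hx)
    have hd : HasDerivAt (fun t : ℝ => -(K * t)) (-K) t := by
      exact ((hasDerivAt_id' t).const_mul K).neg.congr_deriv (by ring)
    have := (hasDerivAt_g hK t).div hd (by simp [hK.ne', htne])
    exact this.congr_deriv (by field_simp; ring)
  have hcont : ContinuousWithinAt f (Set.Iic x) x := by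
    apply ContinuousAt.continuousWithinAt
    apply ContinuousAt.div (g_cont hK).continuousAt (by fun_prop)
    simp [hK.ne', hx0]
  have hint : IntegrableOn (fun t => (1 + 1/(K * t ^ 2)) * g K t) (Set.Iic x) := by
    apply MeasureTheory.Integrable.mono
      (((g_integrable hK).const_mul (1 + 1/(K * x ^ 2))).integrableOn
        (s := Set.Iic x))
    · apply ContinuousOn.aestronglyMeasurable _ measurableSet_Iic
      apply ContinuousOn.mul _ (g_cont hK).continuousOn
      apply ContinuousOn.add continuousOn_const
      apply ContinuousOn.div continuousOn_const (by fun_prop)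
      intro t ht
      have ht0 : t ≠ 0 := ne_of_lt (lt_of_le_of_lt ht hx)
      positivity
    · rw [MeasureTheory.ae_restrict_iff' measurableSet_Iic]
      apply Filter.Eventually.of_forall
      intro t ht
      have htx : t ≤ x := ht
      have ht0 : t < 0 := lt_of_le_of_lt htx hx
      have ht0' : t ≠ 0 := ht0.ne
      have hg := g_pos (K := K) t
      have h1 : 1/(K * t ^ 2) ≤ 1/(K * x ^ 2) := by
        apply one_div_le_one_div_of_le (by positivity)
        have : x ^ 2 ≤ t ^ 2 := by nlinarith
        nlinarith
      have h2 : (0:ℝ) < 1 + 1/(K * t ^ 2) := by positivity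
      have h3 : (0:ℝ) < 1 + 1/(K * x ^ 2) := by positivity
      rw [Real.norm_eq_abs, Real.norm_eq_abs, abs_of_pos (mul_pos h2 hg),
        abs_of_pos (mul_pos h3 hg)]
      nlinarith
  have tends : Tendsto f atBot (𝓝 0) := by
    have hinv : Tendsto (fun t : ℝ => (-(K * t))⁻¹) atBot (𝓝 0) := by
      apply tendsto_inv_atTop_zero.comp
      have h1 : Tendsto (fun t : ℝ => K * t) atBot atBot :=
        (tendsto_const_mul_atBot_of_pos hK).2 tendsto_id
      exact tendsto_neg_atBot_atTop.comp h1
    have := (tendsto_g_atBot hK).mul hinv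
    simpa [hf, div_eq_mul_inv] using this
  have := MeasureTheory.integral_Iic_of_hasDerivAt_of_tendsto hcont hderiv hint tends
  rw [this, sub_zero]
  show g K x / -(K * x) = g K x / (K * -x)
  rw [neg_mul_eq_mul_neg]


lemma G_upper {x : ℝ} (hx : x < 0) : G K x ≤ g K x / (K * (-x)) := by
  have hub : G K x ≤ ∫ t in Set.Iic x, (-x)⁻¹ * ((-t) * g K t) := by
    unfold G
    apply MeasureTheory.setIntegral_mono_on (g_integrable hK).integrableOn
    · have h0 := (integrable_mul_exp_neg_mul_sq (half_pos hK)).neg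
      have h1 : Integrable (fun t : ℝ => (-t) * g K t) :=
        h0.congr (Filter.Eventually.of_forall fun t => by
          rw [g_eq]; simp only [Pi.neg_apply]; ring)
      exact (h1.const_mul _).integrableOn
    · exact measurableSet_Iic
    · intro t ht
      have ht' : t ≤ x := ht
      have hg := g_pos (K := K) t
      have h1 : (1:ℝ) ≤ (-t) * (-x)⁻¹ := by
        rw [← div_eq_mul_inv]
        rw [le_div_iff₀ (by linarith)]
        linarith
      nlinarith
  rw [MeasureTheory.integral_const_mul, integral_neg_mul_g hK hx] at hub
  calc G K x ≤ (-x)⁻¹ * (g K x / K) := hub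
    _ = g K x / (K * (-x)) := by
        field_simp

lemma G_lower {x : ℝ} (hx : x < 0) :
    g K x / (K * (-x)) ≤ (1 + 1/(K * x ^ 2)) * G K x := by
  have hx0 : x ≠ 0 := hx.ne
  have hub : ∫ t in Set.Iic x, (1 + 1/(K * t ^ 2)) * g K t
      ≤ ∫ t in Set.Iic x, (1 + 1/(K * x ^ 2)) * g K t := by
    apply MeasureTheory.setIntegral_mono_on
    · -- integrability of corrected integrand: reuse proof idea via the integral lemma? build again
      apply MeasureTheory.Integrable.mono
        (((g_integrable hK).const_mul (1 + 1/(K * x ^ 2))).integrableOn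
          (s := Set.Iic x))
      · apply ContinuousOn.aestronglyMeasurable _ measurableSet_Iic
        apply ContinuousOn.mul _ (g_cont hK).continuousOn
        apply ContinuousOn.add continuousOn_const
        apply ContinuousOn.div continuousOn_const (by fun_prop)
        intro t ht
        have ht0 : t ≠ 0 := ne_of_lt (lt_of_le_of_lt ht hx)
        positivity
      · rw [MeasureTheory.ae_restrict_iff' measurableSet_Iic]
        apply Filter.Eventually.of_forall
        intro t ht
        have htx : t ≤ x := ht
        have ht0 : t < 0 := lt_of_le_of_lt htx hx
        have ht0' : t ≠ 0 := ht0.ne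
        have hg := g_pos (K := K) t
        have h1 : 1/(K * t ^ 2) ≤ 1/(K * x ^ 2) := by
          apply one_div_le_one_div_of_le (by positivity)
          have : x ^ 2 ≤ t ^ 2 := by nlinarith
          nlinarith
        have h2 : (0:ℝ) < 1 + 1/(K * t ^ 2) := by positivity
        have h3 : (0:ℝ) < 1 + 1/(K * x ^ 2) := by positivity
        rw [Real.norm_eq_abs, Real.norm_eq_abs, abs_of_pos (mul_pos h2 hg),
          abs_of_pos (mul_pos h3 hg)]
        nlinarith
    · exact ((g_integrable hK).const_mul _).integrableOn
    · exact measurableSet_Iic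
    · intro t ht
      have htx : t ≤ x := ht
      have ht0 : t < 0 := lt_of_le_of_lt htx hx
      have ht0' : t ≠ 0 := ht0.ne
      have hg := g_pos (K := K) t
      have h1 : 1/(K * t ^ 2) ≤ 1/(K * x ^ 2) := by
        apply one_div_le_one_div_of_le (by positivity)
        have : x ^ 2 ≤ t ^ 2 := by nlinarith
        nlinarith
      nlinarith
  rw [integral_corr_g hK hx, MeasureTheory.integral_const_mul] at hub
  exact hub

/-- normalized Mills ratio -/
noncomputable def h (K : ℝ) (x : ℝ) : ℝ := K * (-x) * G K x / g K x

lemma h_pos {x : ℝ} (hx : x < 0) : 0 < h K x := by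
  unfold h
  have := G_pos hK x
  have := g_pos (K := K) x
  have : (0:ℝ) < -x := by linarith
  positivity

lemma h_le_one {x : ℝ} (hx : x < 0) : h K x ≤ 1 := by
  unfold h
  rw [div_le_one (g_pos x)]
  have := G_upper hK hx
  have hKx : 0 < K * (-x) := by
    have : (0:ℝ) < -x := by linarith
    positivity
  rw [div_eq_mul_inv] at this
  calc K * (-x) * G K x ≤ K * (-x) * (g K x * (K * (-x))⁻¹) := by
        apply mul_le_mul_of_nonneg_left _ hKx.le
        rwa [mul_comm (g K x)] at this ⊢
    _ = g K x := by
        rw [mul_comm (g K x) _, ← mul_assoc, mul_inv_cancel₀ hKx.ne', one_mul]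

lemma h_ge {x : ℝ} (hx : x < 0) : 1 / (1 + 1/(K * x ^ 2)) ≤ h K x := by
  have hx0 : x ≠ 0 := hx.ne
  have hnx : (0:ℝ) < -x := by linarith
  have hc : (0:ℝ) < 1 + 1/(K * x ^ 2) := by positivity
  have hG := G_pos hK x
  have hg := g_pos (K := K) x
  have hlow := G_lower hK hx
  unfold h
  rw [div_le_div_iff₀ hc (by positivity)]
  rw [div_le_iff₀ (by positivity)] at hlow
  nlinarith

lemma tendsto_h : Tendsto (h K) atBot (𝓝 1) := by
  have hlb : Tendsto (fun x : ℝ => 1 / (1 + 1/(K * x ^ 2))) atBot (𝓝 1) := by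
    have h1 : Tendsto (fun x : ℝ => 1/(K * x ^ 2)) atBot (𝓝 0) := by
      simp only [one_div]
      apply tendsto_inv_atTop_zero.comp
      exact tendsto_sq_atBot.const_mul_atTop hK
    have h2 : Tendsto (fun x : ℝ => 1 + 1/(K * x ^ 2)) atBot (𝓝 1) := by
      simpa using tendsto_const_nhds.add h1
    have h3 : Tendsto (fun x : ℝ => 1 / (1 + 1/(K * x ^ 2))) atBot (𝓝 (1 / 1)) :=
      tendsto_const_nhds.div h2 one_ne_zero
    simpa using h3
  apply tendsto_of_tendsto_of_tendsto_of_le_of_le' hlb tendsto_const_nhds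
  · filter_upwards [Iio_mem_atBot (0:ℝ)] with x hx
    exact h_ge hK hx
  · filter_upwards [Iio_mem_atBot (0:ℝ)] with x hx
    exact h_le_one hK hx


lemma tendsto_PhiK_atBot : Tendsto (PhiK K) atBot (𝓝 0) := by
  have hupper : Tendsto (fun x : ℝ => c K * (g K x * (K * (-x))⁻¹)) atBot (𝓝 0) := by
    have hinv : Tendsto (fun x : ℝ => (K * (-x))⁻¹) atBot (𝓝 0) :=
      tendsto_inv_atTop_zero.comp (tendsto_neg_atBot_atTop.const_mul_atTop hK)
    have := ((tendsto_g_atBot hK).mul hinv).const_mul (c K)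
    simpa using this
  apply tendsto_of_tendsto_of_tendsto_of_le_of_le' tendsto_const_nhds hupper
  · exact Filter.Eventually.of_forall fun x => (PhiK_pos hK x).le
  · filter_upwards [Iio_mem_atBot (0:ℝ)] with x hx
    rw [PhiK_eq]
    apply mul_le_mul_of_nonneg_left _ (c_pos hK).le
    have := G_upper hK hx
    rwa [div_eq_mul_inv] at this

/-- normalized log of the tail -/
noncomputable def m (K : ℝ) (x : ℝ) : ℝ := Real.log (1 / PhiK K x) / (K * x ^ 2 / 2)

lemma log_PhiK {x : ℝ} (hx : x < 0) :
    Real.log (1 / PhiK K x) = K * x ^ 2 / 2 +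
      (Real.log (K * (-x)) - Real.log (h K x) - Real.log (c K)) := by
  have hG := G_pos hK x
  have hg := g_pos (K := K) x
  have hnx : (0:ℝ) < -x := by linarith
  have hKx : (0:ℝ) < K * (-x) := by positivity
  have hh := h_pos hK hx
  have hx0 : x ≠ 0 := hx.ne
  have hGeq : G K x = h K x * g K x / (K * (-x)) := by
    unfold h; field_simp
  rw [one_div, Real.log_inv, PhiK_eq, Real.log_mul (c_pos hK).ne' hG.ne', hGeq,
    Real.log_div (mul_pos hh hg).ne' hKx.ne', Real.log_mul hh.ne' hg.ne']
  have hlg : Real.log (g K x) = -(K * x ^ 2 / 2) := by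
    unfold g; rw [Real.log_exp]; ring
  rw [hlg]; ring

lemma tendsto_m : Tendsto (m K) atBot (𝓝 1) := by
  have hinv : Tendsto (fun x : ℝ => (K * x ^ 2 / 2)⁻¹) atBot (𝓝 0) :=
    tendsto_inv_atTop_zero.comp
      ((tendsto_sq_atBot.const_mul_atTop hK).atTop_div_const two_pos)
  have hA : Tendsto (fun x : ℝ => Real.log (K * (-x)) / (K * x ^ 2 / 2)) atBot (𝓝 0) := by
    have h1 : Tendsto (fun y : ℝ => Real.log y / y) atTop (𝓝 0) :=
      Real.isLittleO_log_id_atTop.tendsto_div_nhds_zero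
    have h2 : Tendsto (fun x : ℝ => K * (-x)) atBot atTop :=
      tendsto_neg_atBot_atTop.const_mul_atTop hK
    have h3 := h1.comp h2
    have h4 : Tendsto (fun x : ℝ => 2 / (-x)) atBot (𝓝 0) := by
      have := (tendsto_inv_atTop_zero.comp (tendsto_neg_atBot_atTop : Tendsto (fun x : ℝ => -x) atBot atTop)).const_mul (2:ℝ)
      simpa [div_eq_mul_inv] using this
    have h5 := h3.mul h4
    rw [show (0:ℝ) * 0 = 0 by ring] at h5
    apply h5.congr'
    filter_upwards [Iio_mem_atBot (0:ℝ)] with x hx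
    have hx0 : x ≠ 0 := hx.ne
    show Real.log (K * (-x)) / (K * (-x)) * (2 / (-x)) = Real.log (K * (-x)) / (K * x ^ 2 / 2)
    rw [div_mul_div_comm, div_div_eq_mul_div, show (K * -x) * -x = K * x ^ 2 by ring]
  have hB : Tendsto (fun x : ℝ => Real.log (h K x) / (K * x ^ 2 / 2)) atBot (𝓝 0) := by
    have h1 : Tendsto (fun x : ℝ => Real.log (h K x)) atBot (𝓝 0) := by
      have := (Real.continuousAt_log one_ne_zero).tendsto.comp (tendsto_h hK)
      simpa [Function.comp_def] using this
    have := h1.mul hinv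
    rw [show (0:ℝ) * 0 = 0 by ring] at this
    simpa [div_eq_mul_inv] using this
  have hC : Tendsto (fun x : ℝ => Real.log (c K) / (K * x ^ 2 / 2)) atBot (𝓝 0) := by
    have := hinv.const_mul (Real.log (c K))
    simpa [div_eq_mul_inv] using this
  have hfinal := tendsto_const_nhds (x := (1:ℝ)) (f := atBot (α := ℝ)) |>.add ((hA.sub hB).sub hC)
  rw [show (1:ℝ) + (0 - 0 - 0) = 1 by ring] at hfinal
  apply hfinal.congr'
  filter_upwards [Iio_mem_atBot (0:ℝ)] with x hx
  have hx0 : x ≠ 0 := hx.ne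
  have hne : K * x ^ 2 / 2 ≠ 0 := by positivity
  show 1 + _ = m K x
  unfold m
  rw [log_PhiK hK hx, add_div, div_self hne, sub_div, sub_div]

lemma tendsto_F : Tendsto (fun x => phiK K x /
    (PhiK K x * Real.sqrt (2 * K * Real.log (1 / PhiK K x)))) atBot (𝓝 1) := by
  have hhm : Tendsto (fun x => (h K x * Real.sqrt (m K x))⁻¹) atBot (𝓝 1) := by
    have hs : Tendsto (fun x => Real.sqrt (m K x)) atBot (𝓝 1) := by
      have := (Real.continuous_sqrt.continuousAt (x := (1:ℝ))).tendsto.comp (tendsto_m hK)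
      simpa [Function.comp_def] using this
    have := ((tendsto_h hK).mul hs).inv₀ (by norm_num)
    simpa using this
  apply hhm.congr'
  filter_upwards [Iio_mem_atBot (0:ℝ), (tendsto_m hK).eventually_const_lt (by norm_num : (0:ℝ) < 1)]
    with x hx hm
  have hxlt : x < 0 := hx
  have hx0 : x ≠ 0 := hxlt.ne
  have hnx : (0:ℝ) < -x := by linarith
  have hKx : (0:ℝ) < K * (-x) := by positivity
  have hG := G_pos hK x
  have hg := g_pos (K := K) x
  have hc := c_pos hK
  have hsm : (0:ℝ) < Real.sqrt (m K x) := Real.sqrt_pos.2 hm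
  have hh := h_pos hK hxlt
  have hGeq : G K x = h K x * g K x / (K * (-x)) := by
    unfold h; field_simp
  have hL : Real.log (1 / PhiK K x) = m K x * (K * x ^ 2 / 2) := by
    unfold m
    rw [div_mul_cancel₀ _ (by positivity : K * x ^ 2 / 2 ≠ 0)]
  have hsqrt : Real.sqrt (2 * K * Real.log (1 / PhiK K x)) = K * (-x) * Real.sqrt (m K x) := by
    rw [hL, show 2 * K * (m K x * (K * x ^ 2 / 2)) = (K * (-x)) ^ 2 * m K x by ring,
      Real.sqrt_mul (sq_nonneg _), Real.sqrt_sq hKx.le]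
  show (h K x * Real.sqrt (m K x))⁻¹ = _
  rw [phiK_eq hK, hsqrt, PhiK_eq, hGeq]
  field_simp


lemma PhiK_invFun_eq {p : ℝ} (hp : p ∈ Set.Ioo (0:ℝ) 1) :
    PhiK K (Function.invFun (PhiK K) p) = p := by
  apply Function.invFun_eq
  obtain ⟨a, ha⟩ := ((tendsto_PhiK_atBot hK).eventually_lt_const hp.1).exists
  obtain ⟨b, hb⟩ := ((tendsto_PhiK_atTop hK).eventually_const_lt hp.2).exists
  have hab : a ≤ b := by
    by_contra hab
    push_neg at hab
    exact absurd ((strictMono_PhiK hK).monotone hab.le) (by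
      intro hle
      linarith [hp.1, hp.2])
  have := intermediate_value_Icc hab (continuous_PhiK hK).continuousOn
  obtain ⟨x, _, hx⟩ := this ⟨ha.le, hb.le⟩
  exact ⟨x, hx⟩

lemma tendsto_invFun_atBot :
    Tendsto (Function.invFun (PhiK K)) (𝓝[>] (0:ℝ)) atBot := by
  rw [tendsto_atBot]
  intro M
  filter_upwards [Ioo_mem_nhdsGT_of_mem (Set.left_mem_Ico.2 (PhiK_pos hK M))] with p hp
  have hp1 : p ∈ Set.Ioo (0:ℝ) 1 := ⟨hp.1, hp.2.trans (PhiK_lt_one hK M)⟩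
  have heq := PhiK_invFun_eq hK hp1
  have : PhiK K (Function.invFun (PhiK K) p) < PhiK K M := by
    rw [heq]; exact hp.2
  exact ((strictMono_PhiK hK).lt_iff_lt.1 this).le

end GaussAsymp

open GaussAsymp

/-- Asymptotic of the Gaussian isoperimetric profile at `0`:
`lim_{x→0⁺} I_K(x) / (x √(2K log(1/x))) = 1` for every `K > 0`. -/
theorem gaussianIsopProfile_asymptotic (K : ℝ) (hK : 0 < K) :
    Tendsto (fun x : ℝ =>
        gaussianIsopProfile K x / (x * Real.sqrt (2 * K * Real.log (1 / x))))
      (𝓝[>] 0) (𝓝 1) := by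
  have hmain := (tendsto_F hK).comp (tendsto_invFun_atBot hK)
  apply hmain.congr'
  filter_upwards [Ioo_mem_nhdsGT_of_mem (Set.left_mem_Ico.2 one_pos)] with p hp
  have heq := PhiK_invFun_eq hK hp
  show phiK K (Function.invFun (PhiK K) p) /
      (PhiK K (Function.invFun (PhiK K) p) *
        Real.sqrt (2 * K * Real.log (1 / PhiK K (Function.invFun (PhiK K) p)))) = _
  rw [heq]
  rfl
end
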